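/- arXiv:2111.08325 — 2 statements merged into one kernel-verified Lean document; each statement's English description precedes it below -/
import Mathlib

section
/- Let f be a homeomorphism of a compact metric space X onto itself, and suppose (X,f) has a nondecreasing sequence of f-invariant compact subsets X_1 ⊆ X_2 ⊆ … ⊆ X such that the closure of ∪_{n≥1} X_n equals X, the restriction f|_{X_1} has a periodic point, and each subsystem (X_n, f|_{X_n}) has the shadowing property and is transitive. If for some n_0 ∈ ℕ⁺ the set X_{n_0} is not a single periodic orbit and (X_{n_0}, f|_{X_{n_0}}) has the uniform separation property, then the set {φ ∈ C(X,ℝ) : I_φ(f) ∩ X_{n_0} ≠ ∅} is open and dense in C(X,ℝ) with the supremum norm. -/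
set_option linter.unusedSectionVars false
set_option maxHeartbeats 1000000
set_option linter.unusedVariables false

open MeasureTheory Filter Set Topology ENNReal

section Defs

variable {X : Type*} [MetricSpace X] [CompactSpace X] [MeasurableSpace X] [BorelSpace X]

/-- The Bowen ball of order `n` and radius `ε` centered at `x`. -/
def bowenBall (f : X → X) (n : ℕ) (x : X) (ε : ℝ) : Set X :=
  {y | ∀ j < n, dist (f^[j] x) (f^[j] y) < ε}

/-- `M^s(Z)`, the quantity appearing in Bowen's definition of the topological
entropy of `f` on the subset `Z`. -/
noncomputable def bowenM (f : X → X) (Z : Set X) (s : ℝ) : ℝ≥0∞ :=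
  ⨆ (ε : ℝ) (_ : 0 < ε), ⨆ N : ℕ,
    sInf {t : ℝ≥0∞ | ∃ c : Set (X × ℕ), c.Countable ∧ (∀ p ∈ c, N ≤ p.2) ∧
      Z ⊆ (⋃ p ∈ c, bowenBall f p.2 p.1 ε) ∧
      t = ∑' p : c, ENNReal.ofReal (Real.exp (-(s * ((p : X × ℕ).2 : ℝ))))}

/-- The Bowen topological entropy of `f` on the subset `Z`, defined as the critical
value of `s ↦ M^s(Z)`. -/
noncomputable def htop (f : X → X) (Z : Set X) : ℝ≥0∞ :=
  ⨆ (s : ℝ) (_ : bowenM f Z s = ⊤), ENNReal.ofReal s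

/-- `ξ` is a finite measurable partition of the space. -/
def IsFinPartition {m : ℕ} (ξ : Fin m → Set X) : Prop :=
  (∀ i, MeasurableSet (ξ i)) ∧ Pairwise (Function.onFun Disjoint ξ) ∧ (⋃ i, ξ i) = Set.univ

/-- The static entropy `H_μ` of a finite family of sets. -/
noncomputable def partInfo (μ : Measure X) {ι : Type} [Fintype ι] (A : ι → Set X) : ℝ :=
  ∑ i, Real.negMulLog ((μ (A i)).toReal)

/-- The join `⋁_{i=0}^{n-1} f^{-i} ξ` of the partition `ξ`. -/
def iterJoin (f : X → X) {m : ℕ} (ξ : Fin m → Set X) (n : ℕ) : (Fin n → Fin m) → Set X :=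
  fun c => ⋂ i : Fin n, f^[(i : ℕ)] ⁻¹' ξ (c i)

/-- The entropy of `f` with respect to `μ` and the finite partition `ξ`
(for an invariant measure the defining limit equals the infimum, by subadditivity). -/
noncomputable def entOfPart (f : X → X) (μ : Measure X) {m : ℕ} (ξ : Fin m → Set X) : ℝ :=
  ⨅ n : ℕ, partInfo μ (iterJoin f ξ (n + 1)) / ((n : ℝ) + 1)

/-- The measure-theoretic (Kolmogorov–Sinai) entropy `h_μ(f)`. -/
noncomputable def msEntropy (f : X → X) (μ : Measure X) : ℝ≥0∞ :=
  ⨆ (m : ℕ) (ξ : Fin m → Set X) (_ : IsFinPartition ξ), ENNReal.ofReal (entOfPart f μ ξ)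

/-- The set `M_f(X)` of `f`-invariant Borel probability measures. -/
def invMeas (f : X → X) : Set (ProbabilityMeasure X) :=
  {μ | (μ : Measure X).map f = (μ : Measure X)}

/-- The set `M_{f|_Y}(Y)` of invariant measures of the subsystem `(Y, f|_Y)`,
viewed as measures on `X` giving full mass to `Y`. -/
def invMeasOn (f : X → X) (Y : Set X) : Set (ProbabilityMeasure X) :=
  {μ | μ ∈ invMeas f ∧ (μ : Measure X) Y = 1}

/-- The support `S_μ` of a measure: points all of whose neighborhoods have
positive measure. -/
def suppMeas (μ : Measure X) : Set X :=
  {x | ∀ U : Set X, IsOpen U → x ∈ U → 0 < μ U}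

lemma empAux_isProb (f : X → X) (x : X) {n : ℕ} (hn : n ≠ 0) :
    IsProbabilityMeasure ((n : ℝ≥0∞)⁻¹ • ∑ i ∈ Finset.range n, Measure.dirac (f^[i] x)) := by
  constructor
  have h1 : (∑ i ∈ Finset.range n, Measure.dirac (f^[i] x)) Set.univ = n := by
    rw [Measure.finset_sum_apply]
    simp
  rw [Measure.smul_apply, h1, smul_eq_mul]
  exact ENNReal.inv_mul_cancel (by exact_mod_cast hn) (ENNReal.natCast_ne_top n)

/-- The `n`-th empirical measure `E_n(x) = (1/n) ∑_{i<n} δ_{f^i x}`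
(with the junk value `δ_x` at `n = 0`). -/
noncomputable def empMeas (f : X → X) (x : X) (n : ℕ) : ProbabilityMeasure X :=
  if hn : n = 0 then ⟨Measure.dirac x, by infer_instance⟩
  else ⟨(n : ℝ≥0∞)⁻¹ • ∑ i ∈ Finset.range n, Measure.dirac (f^[i] x), empAux_isProb f x hn⟩

/-- `V_f(x)`: the set of weak* limit points of the sequence of empirical measures of `x`. -/
def vSet (f : X → X) (x : X) : Set (ProbabilityMeasure X) :=
  {μ | MapClusterPt μ atTop fun n => empMeas f x n}

/-- The saturated set `G_K = {x : V_f(x) = K}`. -/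
def gSet (f : X → X) (K : Set (ProbabilityMeasure X)) : Set X :=
  {x | vSet f x = K}

/-- The set of transitive points (points with dense forward orbit). -/
def transPts (f : X → X) : Set X :=
  {x | Dense (Set.range fun n => f^[n] x)}

/-- The set `QR(f)` of quasiregular points: points whose empirical measures converge. -/
def qrPts (f : X → X) : Set X :=
  {x | ∃ μ : ProbabilityMeasure X, vSet f x = {μ}}

/-- The number of times `0 ≤ j < n` at which the orbits of `x` and `y` are
`ε`-apart. -/
noncomputable def sepNum (f : X → X) (n : ℕ) (ε : ℝ) (x y : X) : ℕ :=
  {j | j < n ∧ ε < dist (f^[j] x) (f^[j] y)}.ncard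

/-- The exponential function on `ℝ≥0∞`. -/
noncomputable def expEnn (a : ℝ≥0∞) : ℝ≥0∞ :=
  if a = ⊤ then ⊤ else ENNReal.ofReal (Real.exp a.toReal)

/-- The uniform separation property for the subsystem `(Y, f|_Y)`: for every `η > 0`
there are `δ* > 0`, `ε* > 0` such that for every ergodic invariant measure `μ` of the
subsystem and every weak* neighborhood `F` of `μ` there is `n*` such that for all
`n ≥ n*` there is a `(δ*, n, ε*)`-separated set `Γ ⊆ X_{n,F} ∩ S_μ` with
`|Γ| ≥ e^{n (h_μ(f) - η)}`. -/
def UnifSepOn (f : X → X) (Y : Set X) : Prop :=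
  ∀ η : ℝ, 0 < η → ∃ δ : ℝ, 0 < δ ∧ ∃ ε : ℝ, 0 < ε ∧
    ∀ μ : ProbabilityMeasure X, Ergodic f (μ : Measure X) → (μ : Measure X) Y = 1 →
      ∀ F : Set (ProbabilityMeasure X), F ∈ 𝓝 μ →
        ∃ nF : ℕ, ∀ n : ℕ, nF ≤ n → ∃ Γ : Finset X,
          (↑Γ ⊆ Y ∩ {x | empMeas f x n ∈ F} ∩ suppMeas (μ : Measure X)) ∧
          (∀ x ∈ Γ, ∀ y ∈ Γ, x ≠ y → δ * n ≤ (sepNum f n ε x y : ℝ)) ∧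
          expEnn ((n : ℝ≥0∞) * msEntropy f (μ : Measure X)) ≤
            (Γ.card : ℝ≥0∞) * ENNReal.ofReal (Real.exp (n * η))

/-- The specification property for the subsystem `(Y, f|_Y)`. -/
def SpecOn (f : X → X) (Y : Set X) : Prop :=
  ∀ ε : ℝ, 0 < ε → ∃ K : ℕ, 0 < K ∧
    ∀ s : ℕ, 2 ≤ s → ∀ x : ℕ → X, (∀ i < s, x i ∈ Y) →
      ∀ a b : ℕ → ℕ, a 0 = 0 → (∀ i < s, a i ≤ b i) →
        (∀ i, i + 1 < s → b i + K ≤ a (i + 1)) →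
        ∃ z ∈ Y, ∀ i < s, ∀ j, a i ≤ j → j ≤ b i →
          dist (f^[j] z) (f^[j - a i] (x i)) ≤ ε

/-- The shadowing property for the subsystem `(Y, f|_Y)`. -/
def ShadowOn (f : X → X) (Y : Set X) : Prop :=
  ∀ ε : ℝ, 0 < ε → ∃ δ : ℝ, 0 < δ ∧
    ∀ u : ℕ → X, (∀ n, u n ∈ Y) → (∀ n, dist (u (n + 1)) (f (u n)) < δ) →
      ∃ y ∈ Y, ∀ n, dist (f^[n] y) (u n) < ε

/-- Transitivity of the subsystem `(Y, f|_Y)`: some point of `Y` has forward orbit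
dense in `Y`. -/
def TransOn (f : X → X) (Y : Set X) : Prop :=
  ∃ x ∈ Y, Y ⊆ closure (Set.range fun n => f^[n] x)

/-- `S` is the orbit of a periodic point. -/
def IsPeriodicOrbit (f : X → X) (S : Set X) : Prop :=
  ∃ x : X, (∃ m : ℕ, 0 < m ∧ f^[m] x = x) ∧ S = Set.range fun n => f^[n] x

/-- The irregular set `I_φ(f)` of the observable `φ`: points where the Birkhoff
averages of `φ` do not converge. -/
def irreg (f : X → X) (φ : X → ℝ) : Set X :=
  {x | ¬ ∃ c : ℝ, Tendsto (fun n : ℕ => (∑ i ∈ Finset.range n, φ (f^[i] x)) / (n : ℝ))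
    atTop (𝓝 c)}

end Defs

section AuxLemmas
variable {X : Type*} [MetricSpace X] [CompactSpace X] {f : X → X} {Y : Set X}

lemma iter_mem_of_image_eq (hY : f '' Y = Y) {x : X} (hx : x ∈ Y) (j : ℕ) : f^[j] x ∈ Y := by
  induction j with
  | zero => simpa
  | succ n ih => rw [Function.iterate_succ_apply']; exact hY ▸ Set.mem_image_of_mem f ih

lemma exists_iter_preimage (hY : f '' Y = Y) {b : X} (hb : b ∈ Y) (j : ℕ) :
    ∃ a ∈ Y, f^[j] a = b := by
  induction j with
  | zero => exact ⟨b, hb, rfl⟩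
  | succ n ih =>
    obtain ⟨a, ha, rfl⟩ := ih
    rw [← hY] at ha
    obtain ⟨a', ha', rfl⟩ := ha
    exact ⟨a', ha', by rw [Function.iterate_succ_apply]⟩

/-- A `δ`-chain from `x` to `y` of length `L` inside `Y`. -/
def ChainOn (f : X → X) (Y : Set X) (δ : ℝ) (c : ℕ → X) (L : ℕ) (x y : X) : Prop :=
  c 0 = x ∧ c L = y ∧ (∀ i ≤ L, c i ∈ Y) ∧ ∀ i < L, dist (f (c i)) (c (i + 1)) < δ

lemma ChainOn.concat {δ : ℝ} {c₁ c₂ : ℕ → X} {L₁ L₂ : ℕ} {x y w : X}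
    (h₁ : ChainOn f Y δ c₁ L₁ x y) (h₂ : ChainOn f Y δ c₂ L₂ y w) :
    ChainOn f Y δ (fun i => if i < L₁ then c₁ i else c₂ (i - L₁)) (L₁ + L₂) x w := by
  obtain ⟨h10, h1L, h1m, h1s⟩ := h₁
  obtain ⟨h20, h2L, h2m, h2s⟩ := h₂
  refine ⟨?_, ?_, ?_, ?_⟩
  · by_cases h : 0 < L₁
    · simpa [h]
    · simp only [Nat.not_lt, Nat.le_zero] at h
      subst h
      simpa using h20.trans (h1L ▸ h10.symm ▸ rfl)
  · have : ¬ (L₁ + L₂ < L₁) := by omega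
    simpa [this]
  · intro i hi
    by_cases h : i < L₁
    · simpa [h] using h1m i h.le
    · simp only [h, if_false]
      exact h2m _ (by omega)
  · intro i hi
    by_cases h : i + 1 < L₁
    · simpa [h, Nat.lt_of_succ_lt h] using h1s i (by omega)
    · by_cases h' : i < L₁
      · have hL : i + 1 = L₁ := by omega
        have : c₂ (i + 1 - L₁) = c₁ (i + 1) := by
          rw [hL, Nat.sub_self, h20, ← h1L]
        simp only [h', if_pos, h, if_false, this]
        exact h1s i h'
      · simp only [h, h', if_false]
        have hi' : i - L₁ < L₂ := by omega
        have : i + 1 - L₁ = (i - L₁) + 1 := by omega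
        rw [this]
        exact h2s _ hi'

lemma mod_succ_eq {ℓ : ℕ} (hℓ : 0 < ℓ) (i : ℕ) :
    (i + 1) % ℓ = if i % ℓ + 1 = ℓ then 0 else i % ℓ + 1 := by
  rcases Nat.lt_or_ge (i % ℓ + 1) ℓ with h | h
  · rw [if_neg (by omega)]
    conv_lhs => rw [← Nat.div_add_mod i ℓ]
    rw [add_assoc, Nat.mul_add_mod, Nat.mod_eq_of_lt h]
  · have hmod := Nat.mod_lt i hℓ
    have heq : i % ℓ + 1 = ℓ := by omega
    rw [if_pos heq]
    conv_lhs => rw [← Nat.div_add_mod i ℓ]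
    rw [add_assoc, Nat.mul_add_mod, heq, Nat.mod_self]

lemma ChainOn.modLoop {δ : ℝ} {c : ℕ → X} {L : ℕ} {x : X}
    (h : ChainOn f Y δ c L x x) (hL : 0 < L) (a : ℕ) :
    ChainOn f Y δ (fun i => c (i % L)) (a * L) x x := by
  obtain ⟨h0, hLx, hm, hs⟩ := h
  refine ⟨by simp [Nat.zero_mod, h0], by simp [Nat.mul_mod_left, h0], ?_, ?_⟩
  · intro i _
    exact hm _ (Nat.mod_lt i hL).le
  · intro i _
    simp only []
    rw [mod_succ_eq hL i]
    by_cases hc : i % L + 1 = L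
    · rw [if_pos hc]
      have := hs (i % L) (Nat.mod_lt i hL)
      rw [hc, hLx, ← h0] at this
      exact this
    · rw [if_neg hc]
      exact hs (i % L) (Nat.mod_lt i hL)

lemma exists_late_visit (hf : Continuous f) (hY : f '' Y = Y) {t : X}
    (htd : Y ⊆ closure (Set.range fun n => f^[n] t)) {b : X} (hb : b ∈ Y)
    {η : ℝ} (hη : 0 < η) (j : ℕ) : ∃ n, j ≤ n ∧ dist (f^[n] t) b < η := by
  obtain ⟨b', hb', hfb'⟩ := exists_iter_preimage hY hb j
  have hu : UniformContinuous (f^[j]) :=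
    CompactSpace.uniformContinuous_of_continuous (hf.iterate j)
  obtain ⟨η', hη', hcont⟩ := Metric.uniformContinuous_iff.mp hu η hη
  obtain ⟨w, ⟨n₀, rfl⟩, hw⟩ := Metric.mem_closure_iff.mp (htd hb') η' hη'
  refine ⟨j + n₀, by omega, ?_⟩
  rw [Function.iterate_add_apply]
  calc dist (f^[j] (f^[n₀] t)) b = dist (f^[j] (f^[n₀] t)) (f^[j] b') := by rw [hfb']
    _ < η := hcont (by rw [dist_comm]; exact hw)

lemma exists_chain (hf : Continuous f) (hY : f '' Y = Y) {t : X} (ht : t ∈ Y)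
    (htd : Y ⊆ closure (Set.range fun n => f^[n] t)) {δ : ℝ} (hδ : 0 < δ)
    {x y : X} (hx : x ∈ Y) (hy : y ∈ Y) :
    ∃ L, 0 < L ∧ ∃ c, ChainOn f Y δ c L x y := by
  have hu : UniformContinuous f := CompactSpace.uniformContinuous_of_continuous hf
  obtain ⟨η, hη, hcont⟩ := Metric.uniformContinuous_iff.mp hu δ hδ
  obtain ⟨k, -, hk⟩ := exists_late_visit hf hY htd hx hη 0
  obtain ⟨n, hn, hnb⟩ := exists_late_visit hf hY htd hy hδ (k + 2)
  refine ⟨n - k, by omega, fun i => if i = 0 then x else if i < n - k then f^[k + i] t else y,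
    ?_, ?_, ?_, ?_⟩
  · simp
  · have h1 : ¬ (n - k = 0) := by omega
    have h2 : ¬ (n - k < n - k) := by omega
    simp [h1, h2]
  · intro i hi
    by_cases h0 : i = 0
    · simpa [h0]
    · by_cases h1 : i < n - k
      · simp only [h0, if_false, h1, if_pos]
        exact iter_mem_of_image_eq hY ht _
      · simpa [h0, h1]
  · intro i hi
    by_cases h0 : i = 0
    · subst h0
      have h1 : (1 : ℕ) ≠ 0 := one_ne_zero
      have h2 : 1 < n - k := by omega
      simp only [if_pos rfl, h1, if_false, h2, if_pos]
      have : f^[k + 1] t = f (f^[k] t) := Function.iterate_succ_apply' f k t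
      rw [this]
      exact hcont (by rw [dist_comm]; exact hk)
    · have hi1 : i + 1 ≠ 0 := by omega
      by_cases h1 : i + 1 < n - k
      · have h2 : i < n - k := by omega
        simp only [h0, if_false, h2, if_pos, hi1, h1]
        have : f^[k + (i + 1)] t = f (f^[k + i] t) := by
          rw [show k + (i + 1) = (k + i) + 1 by omega, Function.iterate_succ_apply']
        rw [this]
        simpa using hδ
      · have h2 : i + 1 = n - k := by omega
        have h3 : i < n - k := by omega
        have h4 : ¬ (i + 1 < n - k) := by omega
        simp only [h0, if_false, h3, if_pos, hi1, h4]
        have : f (f^[k + i] t) = f^[n] t := by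
          rw [← Function.iterate_succ_apply' f (k + i) t]
          congr 1
          omega
        rw [this]
        exact hnb

lemma glue {δ : ℝ} {z : X} (Len : ℕ → ℕ) (hLen : ∀ k, 0 < Len k) (W : ℕ → ℕ → X)
    (hW : ∀ k, ChainOn f Y δ (W k) (Len k) z z) :
    ∃ u : ℕ → X, (∀ n, u n ∈ Y) ∧ (∀ n, dist (u (n + 1)) (f (u n)) < δ) ∧
      ∀ k r, r < Len k → u ((∑ j ∈ Finset.range k, Len j) + r) = W k r := by
  classical
  set S : ℕ → ℕ := fun k => ∑ j ∈ Finset.range k, Len j with hS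
  have hSsucc : ∀ k, S (k + 1) = S k + Len k := fun k => Finset.sum_range_succ _ k
  have hSmono : StrictMono S := strictMono_nat_of_lt_succ fun k => by
    rw [hSsucc]; have := hLen k; omega
  have hSk : ∀ k, k ≤ S k := fun k => by
    induction k with
    | zero => simp [hS]
    | succ n ih => rw [hSsucc]; have := hLen n; omega
  set K : ℕ → ℕ := fun n => Nat.findGreatest (fun k => S k ≤ n) n with hK
  have hKspec : ∀ n, S (K n) ≤ n ∧ n < S (K n + 1) := by
    intro n
    have h0 : S 0 ≤ n := by simp [hS]
    have hs : S (K n) ≤ n := Nat.findGreatest_spec (P := fun k => S k ≤ n) (Nat.zero_le n) h0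
    refine ⟨hs, ?_⟩
    by_contra hc
    push_neg at hc
    have hle : K n + 1 ≤ n := le_trans (hSk _) hc
    have h5 : K n + 1 ≤ K n := Nat.le_findGreatest (P := fun k => S k ≤ n) hle hc
    omega
  have hKuniq : ∀ n k, S k ≤ n → n < S (k + 1) → K n = k := by
    intro n k h1 h2
    obtain ⟨ha, hb⟩ := hKspec n
    rcases lt_trichotomy (K n) k with h | h | h
    · have : S (K n + 1) ≤ S k := hSmono.monotone (by omega)
      omega
    · exact h
    · have : S (k + 1) ≤ S (K n) := hSmono.monotone (by omega)
      omega
  refine ⟨fun n => W (K n) (n - S (K n)), ?_, ?_, ?_⟩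
  · intro n
    obtain ⟨h1, h2⟩ := hKspec n
    exact (hW (K n)).2.2.1 _ (by rw [hSsucc] at h2; omega)
  · intro n
    obtain ⟨h1, h2⟩ := hKspec n
    rw [hSsucc] at h2
    rw [dist_comm]
    show dist (f (W (K n) (n - S (K n)))) (W (K (n + 1)) (n + 1 - S (K (n + 1)))) < δ
    by_cases hend : n + 1 < S (K n) + Len (K n)
    · have hK1 : K (n + 1) = K n := hKuniq (n + 1) (K n) (by omega) (by rw [hSsucc]; omega)
      rw [hK1]
      have harith : n + 1 - S (K n) = (n - S (K n)) + 1 := by omega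
      rw [harith]
      exact (hW (K n)).2.2.2 _ (by omega)
    · have hEnd : n + 1 = S (K n + 1) := by rw [hSsucc]; omega
      have hK1 : K (n + 1) = K n + 1 := by
        refine hKuniq (n + 1) (K n + 1) (by omega) ?_
        rw [hSsucc (K n + 1)]
        have := hLen (K n + 1)
        omega
      rw [hK1, hEnd, Nat.sub_self]
      have hv : W (K n + 1) 0 = W (K n) (Len (K n)) := by
        rw [(hW (K n + 1)).1, (hW (K n)).2.1]
      rw [hv]
      have harith : Len (K n) = (n - S (K n)) + 1 := by omega
      rw [harith]
      exact (hW (K n)).2.2.2 _ (by omega)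
  · intro k r hr
    have h1 : S k ≤ S k + r := by omega
    have h2 : S k + r < S (k + 1) := by rw [hSsucc]; omega
    show W (K (S k + r)) ((S k + r) - S (K (S k + r))) = W k r
    rw [hKuniq (S k + r) k h1 h2]
    simp

lemma iterate_mod_period {p : X} {m : ℕ} (hm : 0 < m) (hfm : f^[m] p = p) (n : ℕ) :
    f^[n] p = f^[n % m] p := by
  conv_lhs => rw [← Nat.mod_add_div n m]
  rw [Function.iterate_add_apply, Function.iterate_mul]
  rw [Function.iterate_fixed hfm (n / m)]

theorem density_aux (f : X → X) (hf : Continuous f) (Y : Set X) (hYinv : f '' Y = Y)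
    (hsh : ShadowOn f Y) (htr : TransOn f Y)
    (p : X) (hpY : p ∈ Y) (m : ℕ) (hm : 0 < m) (hfm : f^[m] p = p)
    (hnot : ¬ IsPeriodicOrbit f Y)
    (φ : C(X, ℝ)) (ε : ℝ) (hε : 0 < ε) :
    ∃ ψ : C(X, ℝ), dist ψ φ < ε ∧ (irreg f ⇑ψ ∩ Y).Nonempty := by
  classical
  by_cases hcase : (irreg f ⇑φ ∩ Y).Nonempty
  · exact ⟨φ, by simpa using hε, hcase⟩
  -- the periodic orbit and a point outside it
  have horbY : ∀ n, f^[n] p ∈ Y := fun n => iter_mem_of_image_eq hYinv hpY n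
  set O : Set X := (fun i : ℕ => f^[i] p) '' (Set.Iio m) with hO
  have hOrange : (Set.range fun n => f^[n] p) = O := by
    ext w
    constructor
    · rintro ⟨n, rfl⟩
      exact ⟨n % m, Nat.mod_lt n hm, (iterate_mod_period hm hfm n).symm⟩
    · rintro ⟨i, -, rfl⟩
      exact ⟨i, rfl⟩
  have hOfin : O.Finite := (Set.finite_Iio m).image _
  have hOne : O.Nonempty := ⟨p, 0, hm, rfl⟩
  have hOY : O ⊆ Y := by rintro w ⟨i, -, rfl⟩; exact horbY i
  have hzex : ∃ z, z ∈ Y ∧ z ∉ O := by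
    by_contra h
    push_neg at h
    exact hnot ⟨p, ⟨m, hm, hfm⟩, (Set.Subset.antisymm h hOY).trans hOrange.symm⟩
  obtain ⟨z, hzY, hzO⟩ := hzex
  -- the separation radius R
  set R : ℝ := Metric.infDist z O / 3 with hRdef
  have hRpos : 0 < R := by
    have := (hOfin.isClosed.notMem_iff_infDist_pos hOne).mp hzO
    positivity
  have hRd : ∀ w ∈ O, 3 * R ≤ dist z w := by
    intro w hw
    have := Metric.infDist_le_dist_of_mem (x := z) hw
    rw [hRdef]
    linarith
  -- the bump function g
  set NO : Set X := ⋃ w ∈ O, Metric.closedBall w R with hNO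
  have hNOclosed : IsClosed NO := hOfin.isClosed_biUnion fun w _ => Metric.isClosed_closedBall
  have hdisj : Disjoint NO (Metric.closedBall z R) := by
    rw [Set.disjoint_left]
    rintro x hx hx'
    obtain ⟨w, hw, hxw⟩ := Set.mem_iUnion₂.mp hx
    rw [Metric.mem_closedBall] at hxw hx'
    have h3 := hRd w hw
    have : dist z w ≤ dist z x + dist x w := dist_triangle z x w
    rw [dist_comm z x] at this
    linarith
  obtain ⟨g, hg0, hg1, hg01⟩ :=
    exists_continuous_zero_one_of_isClosed hNOclosed Metric.isClosed_closedBall hdisj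
  -- shadowing constant and chains
  obtain ⟨δ, hδ, hshad⟩ := hsh R hRpos
  obtain ⟨t, htY, htd⟩ := htr
  obtain ⟨ℓ, hℓpos, cz, hcz⟩ := exists_chain hf hYinv htY htd hδ hzY hzY
  obtain ⟨ℓ₁, hℓ₁pos, ce, hce⟩ := exists_chain hf hYinv htY htd hδ hzY hpY
  obtain ⟨ℓ₂, hℓ₂pos, ch, hch⟩ := exists_chain hf hYinv htY htd hδ hpY hzY
  -- sizes
  set G' : ℕ := 2 * (1 + ℓ) * (1 + ℓ + ℓ₁) with hG'
  set G : ℕ := 1 + ℓ + ℓ₁ + ℓ₂ + G' * m with hG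
  have hG2 : 2 ≤ G := by rw [hG]; omega
  have hGpow1 : ∀ k : ℕ, 1 ≤ G ^ (k + 1) := fun k => Nat.one_le_pow _ _ (by omega)
  set a : ℕ → ℕ := fun k => G ^ (k + 1) with ha
  set b : ℕ → ℕ := fun k => G' * G ^ (k + 1) with hb
  set A : ℕ → ℕ := fun k => a k * ℓ with hA
  set B : ℕ → ℕ := fun k => b k * m with hB
  set Len : ℕ → ℕ := fun k => A k + (ℓ₁ + (B k + ℓ₂)) with hLen
  have ha_eq : ∀ k, a k = G ^ (k + 1) := fun k => rfl
  have hb_eq : ∀ k, b k = G' * G ^ (k + 1) := fun k => rfl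
  have hA_eq : ∀ k, A k = a k * ℓ := fun k => rfl
  have hB_eq : ∀ k, B k = b k * m := fun k => rfl
  have hLen_eq : ∀ k, Len k = A k + (ℓ₁ + (B k + ℓ₂)) := fun k => rfl
  have hapos : ∀ k, 0 < a k := fun k => by rw [ha_eq]; have := hGpow1 k; omega
  have hApos : ∀ k, 0 < A k := fun k => by rw [hA_eq]; exact Nat.mul_pos (hapos k) hℓpos
  have hLenpos : ∀ k, 0 < Len k := fun k => by
    rw [hLen_eq]; have := hApos k; omega
  have hALen : ∀ k, A k ≤ Len k := fun k => by rw [hLen_eq]; omega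
  -- per-stage chains
  have hCObase : ChainOn f Y δ (fun i => f^[i] p) m p p := by
    refine ⟨rfl, hfm, fun i _ => horbY i, fun i _ => ?_⟩
    show dist (f (f^[i] p)) (f^[i + 1] p) < δ
    rw [Function.iterate_succ_apply' f i p]
    simpa using hδ
  have key : ∀ k, ∃ Wk : ℕ → X, ChainOn f Y δ Wk (Len k) z z ∧
      (∀ j, j < a k → Wk (j * ℓ) = z) ∧
      (∀ r, ℓ₁ + A k ≤ r → r < ℓ₁ + A k + B k → ∃ i, i < m ∧ Wk r = f^[i] p) := by
    intro k
    have hCO : ChainOn f Y δ (fun i => f^[i % m] p) (B k) p p := hCObase.modLoop hm (b k)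
    have hCZ : ChainOn f Y δ (fun i => cz (i % ℓ)) (A k) z z := hcz.modLoop hℓpos (a k)
    have c3 := hCO.concat hch
    have c2 := hce.concat c3
    have c1 := hCZ.concat c2
    refine ⟨_, c1, ?_, ?_⟩
    · intro j hj
      have hcond : j * ℓ < A k := by
        rw [hA]
        exact (Nat.mul_lt_mul_right hℓpos).mpr hj
      beta_reduce
      rw [if_pos hcond, Nat.mul_mod_left, hcz.1]
    · intro r h1 h2
      refine ⟨(r - A k - ℓ₁) % m, Nat.mod_lt _ hm, ?_⟩
      have hc1 : ¬ (r < A k) := by omega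
      have hc2 : ¬ (r - A k < ℓ₁) := by omega
      have hc3 : r - A k - ℓ₁ < B k := by omega
      beta_reduce
      rw [if_neg hc1, if_neg hc2, if_pos hc3]
  choose W hWchain hWz hWO using key
  obtain ⟨u, humem, hustep, hueval⟩ := glue Len hLenpos W hWchain
  obtain ⟨y, hyY, hyshad⟩ := hshad u humem hustep
  -- the indicator averages
  set S : ℕ → ℕ := fun k => ∑ j ∈ Finset.range k, Len j with hS
  set v : ℕ → ℝ := fun n => g (f^[n] y) with hv
  have hv01 : ∀ n, 0 ≤ v n ∧ v n ≤ 1 := fun n => ⟨(hg01 _).1, (hg01 _).2⟩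
  have hv1 : ∀ k j, j < a k → v (S k + j * ℓ) = 1 := by
    intro k j hj
    have hcond : j * ℓ < A k := by
      rw [hA]; exact (Nat.mul_lt_mul_right hℓpos).mpr hj
    have hu : u (S k + j * ℓ) = z := by
      rw [hueval k (j * ℓ) (lt_of_lt_of_le hcond (hALen k)), hWz k j hj]
    have hmem : f^[S k + j * ℓ] y ∈ Metric.closedBall z R := by
      rw [Metric.mem_closedBall]
      have := hyshad (S k + j * ℓ)
      rw [hu] at this
      linarith
    have := hg1 hmem
    simpa [hv] using this
  have hv0 : ∀ k n, S k + (A k + ℓ₁) ≤ n → n < S k + (A k + ℓ₁) + B k → v n = 0 := by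
    intro k n h1 h2
    set r : ℕ := n - S k with hr
    have hr1 : ℓ₁ + A k ≤ r := by omega
    have hr2 : r < ℓ₁ + A k + B k := by omega
    have hrLen : r < Len k := by rw [hLen_eq]; omega
    obtain ⟨i, him, hWr⟩ := hWO k r hr1 hr2
    have hu : u n = f^[i] p := by
      have := hueval k r hrLen
      rw [show S k + r = n by omega] at this
      rw [this, hWr]
    have hmem : f^[n] y ∈ NO := by
      refine Set.mem_biUnion (show f^[i] p ∈ O from ⟨i, him, rfl⟩) ?_
      rw [Metric.mem_closedBall]
      have := hyshad n
      rw [hu] at this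
      linarith
    have := hg0 hmem
    simpa [hv] using this
  -- key inequalities on sizes
  have hSa : ∀ k, S k ≤ a k := by
    intro k
    induction k with
    | zero => simp [hS, ha]
    | succ n ih =>
      have hstep : S (n + 1) = S n + Len n := Finset.sum_range_succ _ n
      have h1 : 1 ≤ G ^ (n + 1) := hGpow1 n
      have hgoal : S n + Len n ≤ G ^ (n + 2) := by
        have hLn : Len n = G ^ (n + 1) * ℓ + (ℓ₁ + (G' * G ^ (n + 1) * m + ℓ₂)) := rfl
        have hpow : G ^ (n + 2) = G ^ (n + 1) * G := by ring
        have hexp : G ^ (n + 1) * G = G ^ (n + 1) + G ^ (n + 1) * ℓ + G ^ (n + 1) * ℓ₁ +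
            G ^ (n + 1) * ℓ₂ + G ^ (n + 1) * (G' * m) := by rw [hG]; ring
        have e1 : G' * G ^ (n + 1) * m = G ^ (n + 1) * (G' * m) := by ring
        have e2 : ℓ₁ ≤ G ^ (n + 1) * ℓ₁ := Nat.le_mul_of_pos_left ℓ₁ (by omega)
        have e3 : ℓ₂ ≤ G ^ (n + 1) * ℓ₂ := Nat.le_mul_of_pos_left ℓ₂ (by omega)
        have ih' : S n ≤ G ^ (n + 1) := ha_eq n ▸ ih
        rw [hLn, hpow, hexp, e1]
        omega
      rw [hstep]
      exact hgoal
  have hbP : ∀ k, 2 * (1 + ℓ) * (S k + (A k + ℓ₁)) ≤ B k := by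
    intro k
    have h1 : 1 ≤ G ^ (k + 1) := hGpow1 k
    have h2 : S k ≤ G ^ (k + 1) := hSa k
    have hBk : B k = G' * G ^ (k + 1) * m := rfl
    have hAk : A k = G ^ (k + 1) * ℓ := rfl
    have m1 : S k + (A k + ℓ₁) ≤ G ^ (k + 1) * (1 + ℓ + ℓ₁) := by
      have e : G ^ (k + 1) * (1 + ℓ + ℓ₁) = G ^ (k + 1) + G ^ (k + 1) * ℓ + G ^ (k + 1) * ℓ₁ := by
        ring
      have e2 : ℓ₁ ≤ G ^ (k + 1) * ℓ₁ := Nat.le_mul_of_pos_left ℓ₁ (by omega)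
      rw [hAk, e]
      omega
    calc 2 * (1 + ℓ) * (S k + (A k + ℓ₁)) ≤ 2 * (1 + ℓ) * (G ^ (k + 1) * (1 + ℓ + ℓ₁)) :=
          Nat.mul_le_mul_left _ m1
      _ = G' * G ^ (k + 1) := by rw [hG']; ring
      _ ≤ G' * G ^ (k + 1) * m := Nat.le_mul_of_pos_right _ hm
      _ = B k := hBk.symm
  -- sums
  set T : ℕ → ℝ := fun n => ∑ i ∈ Finset.range n, v i with hT
  set M : ℕ → ℕ := fun k => S k + A k with hM
  set N : ℕ → ℕ := fun k => S k + (A k + ℓ₁) + B k with hN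
  have hM_eq : ∀ k, M k = S k + A k := fun k => rfl
  have hN_eq : ∀ k, N k = S k + (A k + ℓ₁) + B k := fun k => rfl
  have hTlower : ∀ k, (a k : ℝ) ≤ T (M k) := by
    intro k
    classical
    set F : Finset ℕ := (Finset.range (a k)).image (fun j => S k + j * ℓ) with hF
    have hFsub : F ⊆ Finset.range (M k) := by
      intro x hx
      rw [hF, Finset.mem_image] at hx
      obtain ⟨j, hj, rfl⟩ := hx
      rw [Finset.mem_range] at hj ⊢
      rw [hM_eq k, hA_eq k]
      have : j * ℓ < a k * ℓ := (Nat.mul_lt_mul_right hℓpos).mpr hj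
      omega
    have hinj : ∀ x ∈ Finset.range (a k), ∀ y ∈ Finset.range (a k),
        S k + x * ℓ = S k + y * ℓ → x = y := by
      intro x _ y _ h
      have : x * ℓ = y * ℓ := by omega
      exact Nat.eq_of_mul_eq_mul_right hℓpos this
    have hsumF : ∑ i ∈ F, v i = (a k : ℝ) := by
      rw [hF, Finset.sum_image hinj]
      rw [Finset.sum_congr rfl fun j hj => hv1 k j (Finset.mem_range.mp hj)]
      simp
    calc (a k : ℝ) = ∑ i ∈ F, v i := hsumF.symm
      _ ≤ ∑ i ∈ Finset.range (M k), v i :=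
          Finset.sum_le_sum_of_subset_of_nonneg hFsub (fun i _ _ => (hv01 i).1)
      _ = T (M k) := rfl
  have hTupper : ∀ k, T (N k) ≤ ((S k + (A k + ℓ₁) : ℕ) : ℝ) := by
    intro k
    have hsplit : T (N k) = (∑ i ∈ Finset.range (S k + (A k + ℓ₁)), v i) +
        ∑ j ∈ Finset.range (B k), v (S k + (A k + ℓ₁) + j) := by
      rw [hT, hN]
      exact Finset.sum_range_add v (S k + (A k + ℓ₁)) (B k)
    have hzero : ∑ j ∈ Finset.range (B k), v (S k + (A k + ℓ₁) + j) = 0 := by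
      refine Finset.sum_eq_zero fun j hj => ?_
      rw [Finset.mem_range] at hj
      exact hv0 k _ (by omega) (by omega)
    have hbound : (∑ i ∈ Finset.range (S k + (A k + ℓ₁)), v i) ≤
        ((S k + (A k + ℓ₁) : ℕ) : ℝ) := by
      calc (∑ i ∈ Finset.range (S k + (A k + ℓ₁)), v i)
          ≤ (Finset.range (S k + (A k + ℓ₁))).card • (1 : ℝ) :=
            Finset.sum_le_card_nsmul _ _ _ (fun i _ => (hv01 i).2)
        _ = ((S k + (A k + ℓ₁) : ℕ) : ℝ) := by simp
    rw [hsplit, hzero, add_zero]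
    exact hbound
  -- averages
  set s : ℕ → ℝ := fun n => T n / n with hsdef
  have hMpos : ∀ k, 0 < M k := fun k => by
    have h2 := hApos k
    rw [hM_eq]; omega
  have hNpos : ∀ k, 0 < N k := fun k => by
    have h2 := hApos k
    rw [hN_eq]; omega
  have hsM : ∀ k, 1 / (1 + (ℓ : ℝ)) ≤ s (M k) := by
    intro k
    have hℓR : (0 : ℝ) < 1 + (ℓ : ℝ) := by positivity
    have hMR : (0 : ℝ) < (M k : ℝ) := by exact_mod_cast hMpos k
    rw [hsdef]
    rw [div_le_div_iff₀ hℓR hMR]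
    have h1 : (M k : ℝ) ≤ (1 + (ℓ : ℝ)) * (a k : ℝ) := by
      have hnat : M k ≤ (1 + ℓ) * a k := by
        rw [hM_eq k, hA_eq k]
        have e : (1 + ℓ) * a k = a k + a k * ℓ := by ring
        have := hSa k
        omega
      calc (M k : ℝ) ≤ (((1 + ℓ) * a k : ℕ) : ℝ) := by exact_mod_cast hnat
        _ = (1 + (ℓ : ℝ)) * (a k : ℝ) := by push_cast; ring
    have h2 := hTlower k
    nlinarith [h1, h2]
  have hsN : ∀ k, s (N k) ≤ 1 / (2 * (1 + (ℓ : ℝ))) := by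
    intro k
    have hℓR : (0 : ℝ) < 2 * (1 + (ℓ : ℝ)) := by positivity
    have hNR : (0 : ℝ) < (N k : ℝ) := by exact_mod_cast hNpos k
    rw [hsdef]
    rw [div_le_div_iff₀ hNR hℓR]
    have h2 := hTupper k
    have h3 : (2 * (1 + (ℓ : ℝ))) * ((S k + (A k + ℓ₁) : ℕ) : ℝ) ≤ (N k : ℝ) := by
      have hnat : 2 * (1 + ℓ) * (S k + (A k + ℓ₁)) + (S k + (A k + ℓ₁)) ≤ N k := by
        have := hbP k
        rw [hN_eq]
        omega
      have : (((2 * (1 + ℓ) * (S k + (A k + ℓ₁))) : ℕ) : ℝ) ≤ (N k : ℝ) := by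
        exact_mod_cast le_trans (Nat.le_add_right _ _) hnat
      calc (2 * (1 + (ℓ : ℝ))) * ((S k + (A k + ℓ₁) : ℕ) : ℝ)
          = (((2 * (1 + ℓ) * (S k + (A k + ℓ₁))) : ℕ) : ℝ) := by push_cast; ring
        _ ≤ (N k : ℝ) := this
    nlinarith [h2, h3, hNR]
  -- the perturbed observable
  set ψ : C(X, ℝ) := φ + (ε / 2) • g with hψ
  have hgnorm : ‖g‖ ≤ 1 := by
    rw [ContinuousMap.norm_le g zero_le_one]
    intro x
    rw [Real.norm_eq_abs, abs_le]
    exact ⟨by linarith [(hg01 x).1], (hg01 x).2⟩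
  have hdist : dist ψ φ < ε := by
    rw [dist_eq_norm, hψ]
    have : φ + (ε / 2) • g - φ = (ε / 2) • g := by abel
    rw [this]
    have hb : ‖(ε / 2) • g‖ ≤ ε / 2 := by
      rw [ContinuousMap.norm_le _ (by positivity : (0:ℝ) ≤ ε / 2)]
      intro x
      rw [ContinuousMap.smul_apply, smul_eq_mul, Real.norm_eq_abs, abs_mul,
        abs_of_pos (by positivity : (0:ℝ) < ε / 2)]
      have h1 : |g x| ≤ 1 := by
        rw [abs_le]
        exact ⟨by linarith [(hg01 x).1], (hg01 x).2⟩
      nlinarith [hε, h1, abs_nonneg (g x)]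
    linarith
  refine ⟨ψ, hdist, ⟨y, ?_, hyY⟩⟩
  -- y is irregular for ψ
  rintro ⟨c', hc'⟩
  have hyreg : ∃ c, Tendsto (fun n : ℕ => (∑ i ∈ Finset.range n, φ (f^[i] y)) / (n : ℝ))
      atTop (𝓝 c) := by
    by_contra h
    exact hcase ⟨y, h, hyY⟩
  obtain ⟨c, hcφ⟩ := hyreg
  have hεne : (ε : ℝ) ≠ 0 := ne_of_gt hε
  have hAvg : ∀ n : ℕ, (∑ i ∈ Finset.range n, ψ (f^[i] y)) / (n : ℝ) =
      (∑ i ∈ Finset.range n, φ (f^[i] y)) / (n : ℝ) + (ε / 2) * s n := by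
    intro n
    have hsum : (∑ i ∈ Finset.range n, ψ (f^[i] y)) =
        (∑ i ∈ Finset.range n, φ (f^[i] y)) + (ε / 2) * ∑ i ∈ Finset.range n, v i := by
      rw [Finset.mul_sum, ← Finset.sum_add_distrib]
      refine Finset.sum_congr rfl fun i _ => ?_
      rw [hψ]
      simp [hv, smul_eq_mul]
    rw [hsum, add_div, mul_div_assoc]
  have hslim : Tendsto s atTop (𝓝 ((c' - c) * (2 / ε))) := by
    have h1 : Tendsto (fun n => ((∑ i ∈ Finset.range n, ψ (f^[i] y)) / (n : ℝ) -
        (∑ i ∈ Finset.range n, φ (f^[i] y)) / (n : ℝ)) * (2 / ε)) atTop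
        (𝓝 ((c' - c) * (2 / ε))) := (hc'.sub hcφ).mul_const _
    have h2 : (fun n => ((∑ i ∈ Finset.range n, ψ (f^[i] y)) / (n : ℝ) -
        (∑ i ∈ Finset.range n, φ (f^[i] y)) / (n : ℝ)) * (2 / ε)) = s := by
      funext n
      rw [hAvg n]
      field_simp
      ring
    rwa [h2] at h1
  have hkM : ∀ k : ℕ, k ≤ M k := by
    intro k
    have h1 : k < 2 ^ k := (Nat.lt_two_pow_self (n := k))
    have h2 : 2 ^ k ≤ 2 ^ (k + 1) := Nat.pow_le_pow_right (by omega) (by omega)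
    have h3 : 2 ^ (k + 1) ≤ G ^ (k + 1) := Nat.pow_le_pow_left hG2 _
    have h4 : a k ≤ A k := by rw [hA_eq]; exact Nat.le_mul_of_pos_right _ hℓpos
    have h5 : a k = G ^ (k + 1) := ha_eq k
    rw [hM_eq]
    omega
  have hkN : ∀ k : ℕ, k ≤ N k := by
    intro k
    have h1 := hkM k
    rw [hM_eq] at h1
    rw [hN_eq]
    omega
  have hMtop : Tendsto M atTop atTop := tendsto_atTop_mono hkM tendsto_id
  have hNtop : Tendsto N atTop atTop := tendsto_atTop_mono hkN tendsto_id
  have hγ1 : 1 / (1 + (ℓ : ℝ)) ≤ (c' - c) * (2 / ε) :=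
    ge_of_tendsto' (hslim.comp hMtop) fun k => hsM k
  have hγ2 : (c' - c) * (2 / ε) ≤ 1 / (2 * (1 + (ℓ : ℝ))) :=
    le_of_tendsto' (hslim.comp hNtop) fun k => hsN k
  have hℓR : (0 : ℝ) < 1 + (ℓ : ℝ) := by positivity
  have hcontra : 1 / (1 + (ℓ : ℝ)) ≤ 1 / (2 * (1 + (ℓ : ℝ))) := le_trans hγ1 hγ2
  rw [div_le_div_iff₀ hℓR (by positivity)] at hcontra
  nlinarith [hℓR, hcontra]

variable {X : Type*} [MetricSpace X] [CompactSpace X] {f : X → X}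

lemma birk_abs_le (φ : C(X, ℝ)) (x : X) (n : ℕ) :
    |(∑ i ∈ Finset.range n, φ (f^[i] x)) / (n : ℝ)| ≤ ‖φ‖ := by
  rcases Nat.eq_zero_or_pos n with rfl | hn
  · simpa using norm_nonneg φ
  · rw [abs_div, abs_of_nonneg (by positivity : (0:ℝ) ≤ (n:ℝ))]
    rw [div_le_iff₀ (by positivity)]
    calc |∑ i ∈ Finset.range n, φ (f^[i] x)| ≤ ∑ i ∈ Finset.range n, |φ (f^[i] x)| :=
          Finset.abs_sum_le_sum_abs _ _
      _ ≤ ∑ i ∈ Finset.range n, ‖φ‖ := by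
          refine Finset.sum_le_sum fun i _ => ?_
          exact φ.norm_coe_le_norm (f^[i] x)
      _ = ‖φ‖ * n := by simp [mul_comm]

lemma birk_diff_le (φ ψ : C(X, ℝ)) (x : X) (n : ℕ) :
    |(∑ i ∈ Finset.range n, ψ (f^[i] x)) / (n : ℝ) -
      (∑ i ∈ Finset.range n, φ (f^[i] x)) / (n : ℝ)| ≤ dist ψ φ := by
  rcases Nat.eq_zero_or_pos n with rfl | hn
  · simpa using dist_nonneg
  · rw [div_sub_div_same, abs_div, abs_of_nonneg (by positivity : (0:ℝ) ≤ (n:ℝ)),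
      div_le_iff₀ (by positivity), ← Finset.sum_sub_distrib]
    calc |∑ i ∈ Finset.range n, (ψ (f^[i] x) - φ (f^[i] x))|
        ≤ ∑ i ∈ Finset.range n, |ψ (f^[i] x) - φ (f^[i] x)| := Finset.abs_sum_le_sum_abs _ _
      _ ≤ ∑ i ∈ Finset.range n, dist ψ φ := by
          refine Finset.sum_le_sum fun i _ => ?_
          rw [← Real.dist_eq]
          exact ContinuousMap.dist_apply_le_dist _
      _ = dist ψ φ * n := by simp [mul_comm]

theorem open_aux (f : X → X) (Y : Set X) :
    IsOpen {φ : C(X, ℝ) | (irreg f ⇑φ ∩ Y).Nonempty} := by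
  rw [Metric.isOpen_iff]
  intro φ hφ
  obtain ⟨x, hxi, hxY⟩ := hφ
  set A : ℕ → ℝ := fun n => (∑ i ∈ Finset.range n, φ (f^[i] x)) / (n : ℝ) with hA
  have hbd1 : IsBoundedUnder (· ≤ ·) atTop A :=
    isBoundedUnder_of ⟨‖φ‖, fun n => (abs_le.mp (birk_abs_le φ x n)).2⟩
  have hbd2 : IsBoundedUnder (· ≥ ·) atTop A :=
    isBoundedUnder_of ⟨-‖φ‖, fun n => (abs_le.mp (birk_abs_le φ x n)).1⟩
  have hll : liminf A atTop ≤ limsup A atTop := liminf_le_limsup hbd1 hbd2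
  have hlt : liminf A atTop < limsup A atTop := by
    rcases lt_or_eq_of_le hll with h | h
    · exact h
    · exact absurd ⟨limsup A atTop, tendsto_of_liminf_eq_limsup h rfl hbd1 hbd2⟩ hxi
  set r := limsup A atTop - liminf A atTop with hrdef
  have hr : 0 < r := by simp [hrdef, sub_pos, hlt]
  refine ⟨r / 8, by positivity, ?_⟩
  intro ψ hψ
  rw [Metric.mem_ball] at hψ
  refine ⟨x, ?_, hxY⟩
  rintro ⟨c, hc⟩
  set A' : ℕ → ℝ := fun n => (∑ i ∈ Finset.range n, ψ (f^[i] x)) / (n : ℝ) with hA'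
  obtain ⟨N, hN⟩ := Metric.tendsto_atTop.mp hc (r / 8) (by positivity)
  have hup : limsup A atTop ≤ c + r / 4 := by
    refine limsup_le_of_le hbd2.isCoboundedUnder_le ?_
    filter_upwards [eventually_ge_atTop N] with n hn
    have h1 : |A' n - A n| ≤ dist ψ φ := birk_diff_le φ ψ x n
    have h2 : dist (A' n) c < r / 8 := hN n hn
    rw [Real.dist_eq] at h2
    have := abs_le.mp h1
    have := abs_lt.mp h2
    linarith
  have hlo : c - r / 4 ≤ liminf A atTop := by
    refine le_liminf_of_le hbd1.isCoboundedUnder_ge ?_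
    filter_upwards [eventually_ge_atTop N] with n hn
    have h1 : |A' n - A n| ≤ dist ψ φ := birk_diff_le φ ψ x n
    have h2 : dist (A' n) c < r / 8 := hN n hn
    rw [Real.dist_eq] at h2
    have := abs_le.mp h1
    have := abs_lt.mp h2
    linarith
  have : r ≤ r / 2 := by
    rw [hrdef]
    linarith
  linarith

end AuxLemmas


/-- Theorem: the continuous functions whose irregular set meets a non-periodic
subsystem `X_{n₀}` with uniform separation form an open dense subset of `C(X,ℝ)`. -/
theorem irregular_observables_open_dense
    {X : Type*} [MetricSpace X] [CompactSpace X] [Nontrivial X]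
    [MeasurableSpace X] [BorelSpace X]
    (f : X → X) (hf : Continuous f) (hbij : Function.Bijective f)
    (Xs : ℕ → Set X)
    (hXcomp : ∀ n, IsCompact (Xs n))
    (hXinv : ∀ n, f '' Xs n = Xs n)
    (hXmono : Monotone Xs)
    (hXdense : closure (⋃ n, Xs n) = Set.univ)
    (hper : ∃ x ∈ Xs 0, ∃ m : ℕ, 0 < m ∧ f^[m] x = x)
    (hshadow : ∀ n, ShadowOn f (Xs n))
    (htrans : ∀ n, TransOn f (Xs n))
    (n₀ : ℕ) (hnotper : ¬ IsPeriodicOrbit f (Xs n₀))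
    (hus : UnifSepOn f (Xs n₀)) :
    IsOpen {φ : C(X, ℝ) | (irreg f ⇑φ ∩ Xs n₀).Nonempty} ∧
      Dense {φ : C(X, ℝ) | (irreg f ⇑φ ∩ Xs n₀).Nonempty} := by
  obtain ⟨p, hp0, m, hm, hfm⟩ := hper
  have hpY : p ∈ Xs n₀ := hXmono (Nat.zero_le n₀) hp0
  constructor
  · exact open_aux f (Xs n₀)
  · rw [Metric.dense_iff]
    intro φ r hr
    obtain ⟨ψ, hd, hne⟩ := density_aux f hf (Xs n₀) (hXinv n₀) (hshadow n₀) (htrans n₀)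
      p hpY m hm hfm hnotper φ r hr
    exact ⟨ψ, Metric.mem_ball.mpr hd, hne⟩
end

section
/- Let (X,f) be a dynamical system with a nondecreasing sequence of f-invariant compact subsets X_1 ⊆ X_2 ⊆ … ⊆ X such that the closure of ∪_{n≥1} X_n equals X. Let μ ∈ M_f(X) satisfy μ(∪_{n≥1} X_n) = 1, and for each n with μ(X_n) > 0 define μ_n as the normalized restriction of μ to X_n, i.e. μ_n(A) = μ(A ∩ X_n)/μ(X_n). Then μ_n is an invariant measure of the subsystem (X_n, f|_{X_n}), μ_n converges to μ in the weak* topology as n → ∞, and h_{μ_n}(f) → h_μ(f) as n → ∞. -/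
set_option linter.unusedSectionVars false

open MeasureTheory Filter Set Topology ENNReal

lemma myNegMulLog_le_one {x : ℝ} (h0 : 0 ≤ x) (h1 : x ≤ 1) : Real.negMulLog x ≤ 1 := by
  rcases eq_or_lt_of_le h0 with h|h
  · simp [← h]
  · have hlog : Real.log x⁻¹ ≤ x⁻¹ - 1 := Real.log_le_sub_one_of_pos (by positivity)
    rw [Real.log_inv] at hlog
    have hx : x * x⁻¹ = 1 := mul_inv_cancel₀ (ne_of_gt h)
    have : Real.negMulLog x = x * (-Real.log x) := by rw [Real.negMulLog]; ring
    nlinarith [mul_le_mul_of_nonneg_left hlog (le_of_lt h)]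

lemma myNegMulLog_add_le {s t : ℝ} (hs : 0 ≤ s) (ht : 0 ≤ t) :
    Real.negMulLog (s + t) ≤ Real.negMulLog s + Real.negMulLog t := by
  rcases eq_or_lt_of_le hs with h|h
  · simp [← h]
  rcases eq_or_lt_of_le ht with h'|h'
  · simp [← h']
  have l1 : Real.log s ≤ Real.log (s+t) := Real.log_le_log h (by linarith)
  have l2 : Real.log t ≤ Real.log (s+t) := Real.log_le_log h' (by linarith)
  simp only [Real.negMulLog, neg_mul]
  nlinarith

lemma myGibbs_pointwise {x p r : ℝ} (hx : 0 ≤ x) (hxp : x ≤ p) (hxr : x ≤ r) :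
    Real.negMulLog x ≤ x * (-Real.log p) + x * (-Real.log r) + (p * r - x) := by
  rcases eq_or_lt_of_le hx with h|h
  · have : x = 0 := h.symm
    subst this
    simp only [Real.negMulLog_zero, zero_mul, zero_add, sub_zero, add_zero]
    nlinarith
  · have hp' : 0 < p := lt_of_lt_of_le h hxp
    have hr' : 0 < r := lt_of_lt_of_le h hxr
    have key : Real.log ((p*r)/x) ≤ (p*r)/x - 1 := Real.log_le_sub_one_of_pos (by positivity)
    rw [Real.log_div (by positivity) (ne_of_gt h), Real.log_mul (ne_of_gt hp') (ne_of_gt hr')] at key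
    have hmul := mul_le_mul_of_nonneg_left key (le_of_lt h)
    have hx' : x * ((p*r)/x) = p*r := by field_simp
    simp only [Real.negMulLog, neg_mul]
    nlinarith

lemma myEntropyPair {ι κ : Type*} [Fintype ι] [Fintype κ] (q : ι → κ → ℝ)
    (hq : ∀ i k, 0 ≤ q i k) (hsum : ∑ i, ∑ k, q i k = 1) :
    ∑ i, ∑ k, Real.negMulLog (q i k) ≤
      (∑ i, Real.negMulLog (∑ k, q i k)) + ∑ k, Real.negMulLog (∑ i, q i k) := by
  have hrsum : ∑ k, ∑ i, q i k = 1 := by rw [Finset.sum_comm]; exact hsum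
  have key : ∀ i ∈ Finset.univ, ∀ k ∈ (Finset.univ : Finset κ), Real.negMulLog (q i k) ≤
      q i k * (-Real.log (∑ k', q i k')) + q i k * (-Real.log (∑ i', q i' k))
        + ((∑ k', q i k') * (∑ i', q i' k) - q i k) := by
    intro i _ k _
    exact myGibbs_pointwise (hq i k)
      (Finset.single_le_sum (fun k _ => hq i k) (Finset.mem_univ k))
      (Finset.single_le_sum (fun i _ => hq i k) (Finset.mem_univ i))
  calc ∑ i, ∑ k, Real.negMulLog (q i k)
      ≤ ∑ i, ∑ k, (q i k * (-Real.log (∑ k', q i k')) + q i k * (-Real.log (∑ i', q i' k))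
          + ((∑ k', q i k') * (∑ i', q i' k) - q i k)) :=
        Finset.sum_le_sum fun i hi => Finset.sum_le_sum (key i hi)
    _ = (∑ i, ∑ k, q i k * (-Real.log (∑ k', q i k')))
        + (∑ i, ∑ k, q i k * (-Real.log (∑ i', q i' k)))
        + ((∑ i, ∑ k, (∑ k', q i k') * (∑ i', q i' k)) - ∑ i, ∑ k, q i k) := by
        simp [Finset.sum_add_distrib, Finset.sum_sub_distrib]
    _ = (∑ i, Real.negMulLog (∑ k', q i k')) + (∑ k, Real.negMulLog (∑ i', q i' k)) + (1*1 - 1) := by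
        congr 1
        · congr 1
          · refine Finset.sum_congr rfl fun i _ => ?_
            rw [← Finset.sum_mul]
            simp [Real.negMulLog]
          · rw [Finset.sum_comm]
            refine Finset.sum_congr rfl fun k _ => ?_
            rw [← Finset.sum_mul]
            simp [Real.negMulLog]
        · rw [hsum]
          congr 1
          rw [← Finset.sum_mul_sum, hsum, hrsum]
    _ = (∑ i, Real.negMulLog (∑ k, q i k)) + ∑ k, Real.negMulLog (∑ i, q i k) := by ring


section Aux
variable {X : Type*} [MetricSpace X] [CompactSpace X] [MeasurableSpace X] [BorelSpace X]

/-- cells of the iterated join are measurable, pairwise disjoint, and cover. -/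
lemma iterJoin_meas (f : X → X) (hf : Continuous f) {m : ℕ} {ξ : Fin m → Set X}
    (hξ : IsFinPartition ξ) (n : ℕ) (c : Fin n → Fin m) :
    MeasurableSet (iterJoin f ξ n c) :=
  MeasurableSet.iInter fun i => ((hf.iterate (i:ℕ)).measurable) (hξ.1 (c i))

lemma iterJoin_disj (f : X → X) {m : ℕ} {ξ : Fin m → Set X}
    (hξ : IsFinPartition ξ) (n : ℕ) :
    Pairwise (Function.onFun Disjoint (iterJoin f ξ n)) := by
  intro c c' hcc
  have : ∃ i, c i ≠ c' i := by
    by_contra h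
    push_neg at h
    exact hcc (funext h)
  obtain ⟨i, hi⟩ := this
  refine Set.disjoint_left.2 fun x hx hx' => ?_
  have h1 : f^[(i:ℕ)] x ∈ ξ (c i) := Set.mem_iInter.1 hx i
  have h2 : f^[(i:ℕ)] x ∈ ξ (c' i) := Set.mem_iInter.1 hx' i
  exact Set.disjoint_left.1 (hξ.2.1 hi) h1 h2

lemma iterJoin_cover (f : X → X) {m : ℕ} {ξ : Fin m → Set X}
    (hξ : IsFinPartition ξ) (n : ℕ) :
    (⋃ c, iterJoin f ξ n c) = Set.univ := by
  refine Set.eq_univ_of_forall fun x => ?_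
  have : ∀ i : Fin n, ∃ j : Fin m, f^[(i:ℕ)] x ∈ ξ j := by
    intro i
    have : f^[(i:ℕ)] x ∈ ⋃ j, ξ j := hξ.2.2 ▸ Set.mem_univ _
    exact Set.mem_iUnion.1 this
  choose c hc using this
  exact Set.mem_iUnion.2 ⟨c, Set.mem_iInter.2 hc⟩

/-- sum of the (real) measures of a finite partition is 1. -/
lemma sum_toReal_partition {ι : Type*} [Fintype ι] (θ : Measure X) [IsProbabilityMeasure θ]
    (A : ι → Set X) (hmeas : ∀ i, MeasurableSet (A i))
    (hdis : Pairwise (Function.onFun Disjoint A))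
    (hcov : (⋃ i, A i) = Set.univ) : ∑ i, (θ (A i)).toReal = 1 := by
  have h := measure_iUnion (μ := θ) hdis hmeas
  rw [hcov, measure_univ, tsum_fintype] at h
  rw [← ENNReal.toReal_sum (fun i _ => measure_ne_top θ (A i)), ← h, ENNReal.toReal_one]

lemma sum_toReal_inter_partition {ι : Type*} [Fintype ι] (θ : Measure X) [IsProbabilityMeasure θ]
    {S : Set X} (hS : MeasurableSet S) (A : ι → Set X) (hmeas : ∀ i, MeasurableSet (A i))
    (hdis : Pairwise (Function.onFun Disjoint A))
    (hcov : (⋃ i, A i) = Set.univ) : ∑ i, (θ (S ∩ A i)).toReal = (θ S).toReal := by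
  have hdis' : Pairwise (Function.onFun Disjoint (fun i => S ∩ A i)) :=
    fun i j hij => ((hdis hij).mono Set.inter_subset_right Set.inter_subset_right)
  have h := measure_iUnion (μ := θ) hdis' (fun i => hS.inter (hmeas i))
  rw [← Set.inter_iUnion, hcov, Set.inter_univ, tsum_fintype] at h
  rw [← ENNReal.toReal_sum (fun i _ => measure_ne_top θ _), ← h]

lemma toReal_measure_le_one (θ : Measure X) [IsProbabilityMeasure θ] (A : Set X) :
    (θ A).toReal ≤ 1 := by
  have := prob_le_one (μ := θ) (s := A)
  simpa using ENNReal.toReal_mono one_ne_top this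

lemma partInfo_nonneg {ι : Type} [Fintype ι] (θ : Measure X) [IsProbabilityMeasure θ]
    (A : ι → Set X) : 0 ≤ partInfo θ A :=
  Finset.sum_nonneg fun i _ =>
    Real.negMulLog_nonneg ENNReal.toReal_nonneg (toReal_measure_le_one θ (A i))

lemma partInfo_le_card {ι : Type} [Fintype ι] (θ : Measure X) [IsProbabilityMeasure θ]
    (A : ι → Set X) : partInfo θ A ≤ Fintype.card ι := by
  have : ∀ i ∈ Finset.univ, Real.negMulLog ((θ (A i)).toReal) ≤ 1 := fun i _ =>
    myNegMulLog_le_one ENNReal.toReal_nonneg (toReal_measure_le_one θ (A i))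
  calc partInfo θ A ≤ ∑ _i : ι, (1:ℝ) := Finset.sum_le_sum this
    _ = Fintype.card ι := by simp

end Aux

section Aux2
variable {X : Type*} [MetricSpace X] [CompactSpace X] [MeasurableSpace X] [BorelSpace X]

lemma inv_preimage (f : X → X) (hf : Continuous f) (θ : Measure X)
    (hθ : θ.map f = θ) {A : Set X} (hA : MeasurableSet A) : θ (f ⁻¹' A) = θ A := by
  conv_rhs => rw [← hθ]
  rw [Measure.map_apply hf.measurable hA]

lemma inv_preimage_iterate (f : X → X) (hf : Continuous f) (θ : Measure X)
    (hθ : θ.map f = θ) (N : ℕ) {A : Set X} (hA : MeasurableSet A) :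
    θ (f^[N] ⁻¹' A) = θ A := by
  induction N with
  | zero => simp
  | succ n ih =>
    rw [Function.iterate_succ, Set.preimage_comp]
    rw [inv_preimage f hf θ hθ ((hf.iterate n).measurable hA)]
    exact ih

/-- the key decomposition of the (N+M)-join cell. -/
lemma iterJoin_add (f : X → X) {m : ℕ} (ξ : Fin m → Set X) (N M : ℕ)
    (c₁ : Fin N → Fin m) (c₂ : Fin M → Fin m) :
    iterJoin f ξ (N+M) (Sum.elim c₁ c₂ ∘ finSumFinEquiv.symm) =
      iterJoin f ξ N c₁ ∩ f^[N] ⁻¹' iterJoin f ξ M c₂ := by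
  ext x
  simp only [iterJoin, Set.mem_iInter, Set.mem_inter_iff, Set.mem_preimage, Function.comp_apply]
  constructor
  · intro h
    refine ⟨fun i => ?_, fun j => ?_⟩
    · have := h (Fin.castAdd M i)
      simpa [finSumFinEquiv_symm_apply_castAdd] using this
    · have := h (Fin.natAdd N j)
      simp only [finSumFinEquiv_symm_apply_natAdd, Sum.elim_inr, Fin.coe_natAdd] at this
      rwa [add_comm, Function.iterate_add_apply] at this
  · rintro ⟨h₁, h₂⟩ i
    obtain ⟨s, rfl⟩ : ∃ s, finSumFinEquiv s = i := ⟨finSumFinEquiv.symm i, Equiv.apply_symm_apply _ _⟩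
    rw [Equiv.symm_apply_apply]
    cases s with
    | inl i => simpa [finSumFinEquiv_apply_left] using h₁ i
    | inr j =>
      simp only [Sum.elim_inr, finSumFinEquiv_apply_right, Fin.coe_natAdd]
      rw [add_comm, Function.iterate_add_apply]
      exact h₂ j

lemma partInfo_iterJoin_subadd (f : X → X) (hf : Continuous f) (θ : Measure X)
    [IsProbabilityMeasure θ] (hθ : θ.map f = θ) {m : ℕ} {ξ : Fin m → Set X}
    (hξ : IsFinPartition ξ) :
    Subadditive (fun N => partInfo θ (iterJoin f ξ N)) := by
  intro N M
  simp only []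
  set A := iterJoin f ξ N with hA
  set B := iterJoin f ξ M with hB
  set q : (Fin N → Fin m) → (Fin M → Fin m) → ℝ :=
    fun c₁ c₂ => (θ (A c₁ ∩ f^[N] ⁻¹' B c₂)).toReal with hqdef
  have hLHS : partInfo θ (iterJoin f ξ (N+M)) = ∑ c₁, ∑ c₂, Real.negMulLog (q c₁ c₂) := by
    rw [partInfo, ← Equiv.sum_comp
      ((Equiv.sumArrowEquivProdArrow (Fin N) (Fin M) (Fin m)).symm.trans
        (Equiv.arrowCongr finSumFinEquiv (Equiv.refl (Fin m))))
      (fun c => Real.negMulLog ((θ (iterJoin f ξ (N+M) c)).toReal)),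
      Fintype.sum_prod_type]
    refine Finset.sum_congr rfl fun c₁ _ => Finset.sum_congr rfl fun c₂ _ => ?_
    congr 2
    have he : ((Equiv.sumArrowEquivProdArrow (Fin N) (Fin M) (Fin m)).symm.trans
        (Equiv.arrowCongr finSumFinEquiv (Equiv.refl (Fin m)))) (c₁, c₂) =
        Sum.elim c₁ c₂ ∘ finSumFinEquiv.symm := rfl
    rw [he, iterJoin_add]
  have hBmeas : ∀ c₂, MeasurableSet (f^[N] ⁻¹' B c₂) := fun c₂ =>
    (hf.iterate N).measurable (iterJoin_meas f hf hξ M c₂)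
  have hBdisj : Pairwise (Function.onFun Disjoint (fun c₂ => f^[N] ⁻¹' B c₂)) := fun i j hij =>
    Disjoint.preimage _ ((iterJoin_disj f hξ M) hij)
  have hBcov : (⋃ c₂, f^[N] ⁻¹' B c₂) = Set.univ := by
    rw [← Set.preimage_iUnion, iterJoin_cover f hξ M, Set.preimage_univ]
  have hq : ∀ c₁ c₂, 0 ≤ q c₁ c₂ := fun _ _ => ENNReal.toReal_nonneg
  have hmarg1 : ∀ c₁, ∑ c₂, q c₁ c₂ = (θ (A c₁)).toReal := fun c₁ =>
    sum_toReal_inter_partition θ (iterJoin_meas f hf hξ N c₁) _ hBmeas hBdisj hBcov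
  have hmarg2 : ∀ c₂, ∑ c₁, q c₁ c₂ = (θ (B c₂)).toReal := by
    intro c₂
    have : ∀ c₁, q c₁ c₂ = (θ (f^[N] ⁻¹' B c₂ ∩ A c₁)).toReal := fun c₁ => by
      show (θ (A c₁ ∩ f^[N] ⁻¹' B c₂)).toReal = _
      rw [Set.inter_comm]
    rw [Finset.sum_congr rfl fun c₁ _ => this c₁,
      sum_toReal_inter_partition θ (hBmeas c₂) A (iterJoin_meas f hf hξ N)
        (iterJoin_disj f hξ N) (iterJoin_cover f hξ N)]
    exact congrArg ENNReal.toReal (inv_preimage_iterate f hf θ hθ N (iterJoin_meas f hf hξ M c₂))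
  have hsum : ∑ c₁, ∑ c₂, q c₁ c₂ = 1 := by
    rw [Finset.sum_congr rfl fun c₁ _ => hmarg1 c₁]
    exact sum_toReal_partition θ A (iterJoin_meas f hf hξ N) (iterJoin_disj f hξ N)
      (iterJoin_cover f hξ N)
  calc partInfo θ (iterJoin f ξ (N+M)) = ∑ c₁, ∑ c₂, Real.negMulLog (q c₁ c₂) := hLHS
    _ ≤ (∑ c₁, Real.negMulLog (∑ c₂, q c₁ c₂)) + ∑ c₂, Real.negMulLog (∑ c₁, q c₁ c₂) :=
        myEntropyPair q hq hsum
    _ = partInfo θ (iterJoin f ξ N) + partInfo θ (iterJoin f ξ M) := by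
        rw [partInfo, partInfo]
        congr 1
        · exact Finset.sum_congr rfl fun c₁ _ => by rw [hmarg1]
        · exact Finset.sum_congr rfl fun c₂ _ => by rw [hmarg2]
end Aux2

section Aux3
variable {X : Type*} [MetricSpace X] [CompactSpace X] [MeasurableSpace X] [BorelSpace X]

lemma entOfPart_tendsto (f : X → X) (hf : Continuous f) (θ : Measure X)
    [IsProbabilityMeasure θ] (hθ : θ.map f = θ) {m : ℕ} {ξ : Fin m → Set X}
    (hξ : IsFinPartition ξ) :
    Tendsto (fun N : ℕ => partInfo θ (iterJoin f ξ (N+1)) / ((N : ℝ) + 1)) atTop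
      (𝓝 (entOfPart f θ ξ)) := by
  have hsub := partInfo_iterJoin_subadd f hf θ hθ hξ
  have hbdd : BddBelow (Set.range fun n : ℕ => partInfo θ (iterJoin f ξ n) / (n:ℝ)) := by
    refine ⟨0, fun x hx => ?_⟩
    obtain ⟨n, rfl⟩ := hx
    exact div_nonneg (partInfo_nonneg θ _) (Nat.cast_nonneg n)
  have htend := hsub.tendsto_lim hbdd
  have h2 : Tendsto (fun N : ℕ => partInfo θ (iterJoin f ξ (N+1)) / ((N:ℝ)+1)) atTop
      (𝓝 hsub.lim) := by
    have := htend.comp (tendsto_add_atTop_nat 1)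
    refine this.congr fun N => ?_
    simp [Function.comp]
  have hbdd2 : BddBelow (Set.range fun N : ℕ => partInfo θ (iterJoin f ξ (N+1)) / ((N:ℝ)+1)) := by
    refine ⟨0, fun x hx => ?_⟩
    obtain ⟨n, rfl⟩ := hx
    exact div_nonneg (partInfo_nonneg θ _) (by positivity)
  have heq : entOfPart f θ ξ = hsub.lim := by
    apply le_antisymm
    · exact ge_of_tendsto h2 (Eventually.of_forall fun N => ciInf_le hbdd2 N)
    · refine le_ciInf fun N => ?_
      have := hsub.lim_le_div hbdd (n := N+1) (Nat.succ_ne_zero N)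
      simpa [Nat.cast_add] using this
  rw [heq]
  exact h2

lemma entOfPart_nonneg (f : X → X) (θ : Measure X) [IsProbabilityMeasure θ]
    {m : ℕ} (ξ : Fin m → Set X) : 0 ≤ entOfPart f θ ξ :=
  Real.iInf_nonneg fun N => div_nonneg (partInfo_nonneg θ _) (by positivity)

lemma entOfPart_le (f : X → X) (hf : Continuous f) (θ : Measure X) [IsProbabilityMeasure θ]
    {m : ℕ} {ξ : Fin m → Set X} (hξ : IsFinPartition ξ) :
    entOfPart f θ ξ ≤ m := by
  have hbdd2 : BddBelow (Set.range fun N : ℕ => partInfo θ (iterJoin f ξ (N+1)) / ((N:ℝ)+1)) := by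
    refine ⟨0, fun x hx => ?_⟩
    obtain ⟨n, rfl⟩ := hx
    exact div_nonneg (partInfo_nonneg θ _) (by positivity)
  calc entOfPart f θ ξ ≤ partInfo θ (iterJoin f ξ (0+1)) / (((0:ℕ):ℝ)+1) := ciInf_le hbdd2 0
    _ = partInfo θ (iterJoin f ξ 1) := by norm_num
    _ ≤ Fintype.card (Fin 1 → Fin m) := partInfo_le_card θ _
    _ = m := by simp
end Aux3

section Aux4
variable {X : Type*} [MetricSpace X] [CompactSpace X] [MeasurableSpace X] [BorelSpace X]

lemma entOfPart_mix (f : X → X) (hf : Continuous f) (μ ν ρ : Measure X)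
    [IsProbabilityMeasure μ] [IsProbabilityMeasure ν] [IsProbabilityMeasure ρ]
    (hμi : μ.map f = μ) (hνi : ν.map f = ν) (hρi : ρ.map f = ρ)
    {α : ℝ} (hα0 : 0 < α) (hα1 : α < 1)
    (hmix : ∀ A : Set X, MeasurableSet A →
      (μ A).toReal = α * (ν A).toReal + (1-α) * (ρ A).toReal)
    {m : ℕ} {ξ : Fin m → Set X} (hξ : IsFinPartition ξ) :
    α * entOfPart f ν ξ ≤ entOfPart f μ ξ ∧
    entOfPart f μ ξ ≤ α * entOfPart f ν ξ + (1-α) * entOfPart f ρ ξ := by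
  set C := Real.negMulLog α + Real.negMulLog (1-α) with hC
  have cellLow : ∀ N : ℕ, α * partInfo ν (iterJoin f ξ N) ≤ partInfo μ (iterJoin f ξ N) := by
    intro N
    rw [partInfo, partInfo, Finset.mul_sum]
    refine Finset.sum_le_sum fun c _ => ?_
    have hmeasc := iterJoin_meas f hf hξ N c
    set x := (ν (iterJoin f ξ N c)).toReal with hx
    set y := (ρ (iterJoin f ξ N c)).toReal with hy
    have hconc := Real.concaveOn_negMulLog.2 (Set.mem_Ici.2 (ENNReal.toReal_nonneg (a := ν (iterJoin f ξ N c))))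
      (Set.mem_Ici.2 (ENNReal.toReal_nonneg (a := ρ (iterJoin f ξ N c))))
      (le_of_lt hα0) (by linarith : (0:ℝ) ≤ 1 - α) (by ring)
    have hynn : 0 ≤ Real.negMulLog y :=
      Real.negMulLog_nonneg ENNReal.toReal_nonneg (toReal_measure_le_one ρ _)
    have h1 : α * Real.negMulLog x ≤ α • Real.negMulLog x + (1-α) • Real.negMulLog y := by
      simp only [smul_eq_mul]
      nlinarith
    have h2 : α • x + (1-α) • y = (μ (iterJoin f ξ N c)).toReal := by
      simp only [smul_eq_mul]
      exact (hmix _ hmeasc).symm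
    calc α * Real.negMulLog x ≤ α • Real.negMulLog x + (1-α) • Real.negMulLog y := h1
      _ ≤ Real.negMulLog (α • x + (1-α) • y) := hconc
      _ = Real.negMulLog ((μ (iterJoin f ξ N c)).toReal) := by rw [h2]
  have cellUp : ∀ N : ℕ, partInfo μ (iterJoin f ξ N) ≤
      α * partInfo ν (iterJoin f ξ N) + (1-α) * partInfo ρ (iterJoin f ξ N) + C := by
    intro N
    have hsumν : ∑ c, (ν (iterJoin f ξ N c)).toReal = 1 :=
      sum_toReal_partition ν _ (iterJoin_meas f hf hξ N) (iterJoin_disj f hξ N)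
        (iterJoin_cover f hξ N)
    have hsumρ : ∑ c, (ρ (iterJoin f ξ N c)).toReal = 1 :=
      sum_toReal_partition ρ _ (iterJoin_meas f hf hξ N) (iterJoin_disj f hξ N)
        (iterJoin_cover f hξ N)
    have key : ∀ c ∈ Finset.univ, Real.negMulLog ((μ (iterJoin f ξ N c)).toReal) ≤
        α * Real.negMulLog ((ν (iterJoin f ξ N c)).toReal)
        + (1-α) * Real.negMulLog ((ρ (iterJoin f ξ N c)).toReal)
        + ((ν (iterJoin f ξ N c)).toReal * Real.negMulLog α
            + (ρ (iterJoin f ξ N c)).toReal * Real.negMulLog (1-α)) := by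
      intro c _
      set x := (ν (iterJoin f ξ N c)).toReal with hx
      set y := (ρ (iterJoin f ξ N c)).toReal with hy
      rw [hmix _ (iterJoin_meas f hf hξ N c)]
      calc Real.negMulLog (α * x + (1-α) * y)
          ≤ Real.negMulLog (α * x) + Real.negMulLog ((1-α) * y) :=
            myNegMulLog_add_le (by positivity)
              (mul_nonneg (by linarith) ENNReal.toReal_nonneg)
        _ = (x * Real.negMulLog α + α * Real.negMulLog x)
            + (y * Real.negMulLog (1-α) + (1-α) * Real.negMulLog y) := by
            rw [Real.negMulLog_mul, Real.negMulLog_mul]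
        _ = α * Real.negMulLog x + (1-α) * Real.negMulLog y
            + (x * Real.negMulLog α + y * Real.negMulLog (1-α)) := by ring
    calc partInfo μ (iterJoin f ξ N)
        ≤ ∑ c, (α * Real.negMulLog ((ν (iterJoin f ξ N c)).toReal)
          + (1-α) * Real.negMulLog ((ρ (iterJoin f ξ N c)).toReal)
          + ((ν (iterJoin f ξ N c)).toReal * Real.negMulLog α
            + (ρ (iterJoin f ξ N c)).toReal * Real.negMulLog (1-α))) :=
          Finset.sum_le_sum key
      _ = α * partInfo ν (iterJoin f ξ N) + (1-α) * partInfo ρ (iterJoin f ξ N)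
          + ((∑ c, (ν (iterJoin f ξ N c)).toReal) * Real.negMulLog α
            + (∑ c, (ρ (iterJoin f ξ N c)).toReal) * Real.negMulLog (1-α)) := by
          rw [partInfo, partInfo, Finset.mul_sum, Finset.mul_sum, Finset.sum_mul, Finset.sum_mul]
          simp [Finset.sum_add_distrib]
      _ = α * partInfo ν (iterJoin f ξ N) + (1-α) * partInfo ρ (iterJoin f ξ N) + C := by
          rw [hsumν, hsumρ, hC]; ring
  have tμ := entOfPart_tendsto f hf μ hμi hξ
  have tν := entOfPart_tendsto f hf ν hνi hξ
  have tρ := entOfPart_tendsto f hf ρ hρi hξ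
  constructor
  · refine le_of_tendsto_of_tendsto' (tν.const_mul α) tμ fun N => ?_
    have h := cellLow (N+1)
    have hpos : (0:ℝ) < (N:ℝ) + 1 := by positivity
    calc α * (partInfo ν (iterJoin f ξ (N+1)) / ((N:ℝ)+1))
        = (α * partInfo ν (iterJoin f ξ (N+1))) / ((N:ℝ)+1) := by ring
      _ ≤ partInfo μ (iterJoin f ξ (N+1)) / ((N:ℝ)+1) := by gcongr
  · have hCto : Tendsto (fun N : ℕ => C / ((N:ℝ)+1)) atTop (𝓝 0) := by
      have := tendsto_const_div_atTop_nhds_zero_nat C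
      have h2 := this.comp (tendsto_add_atTop_nat 1)
      refine h2.congr fun N => ?_
      simp [Function.comp]
    have tR : Tendsto (fun N : ℕ => α * (partInfo ν (iterJoin f ξ (N+1)) / ((N:ℝ)+1))
        + (1-α) * (partInfo ρ (iterJoin f ξ (N+1)) / ((N:ℝ)+1)) + C / ((N:ℝ)+1)) atTop
        (𝓝 (α * entOfPart f ν ξ + (1-α) * entOfPart f ρ ξ + 0)) :=
      ((tν.const_mul α).add (tρ.const_mul (1-α))).add hCto
    rw [add_zero] at tR
    refine le_of_tendsto_of_tendsto' tμ tR fun N => ?_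
    have h := cellUp (N+1)
    have hpos : (0:ℝ) < (N:ℝ) + 1 := by positivity
    calc partInfo μ (iterJoin f ξ (N+1)) / ((N:ℝ)+1)
        ≤ (α * partInfo ν (iterJoin f ξ (N+1)) + (1-α) * partInfo ρ (iterJoin f ξ (N+1)) + C)
            / ((N:ℝ)+1) := by gcongr
      _ = α * (partInfo ν (iterJoin f ξ (N+1)) / ((N:ℝ)+1))
          + (1-α) * (partInfo ρ (iterJoin f ξ (N+1)) / ((N:ℝ)+1)) + C / ((N:ℝ)+1) := by ring
end Aux4

section Aux5
variable {X : Type*} [MetricSpace X] [CompactSpace X] [MeasurableSpace X] [BorelSpace X]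

lemma ofReal_entOfPart_le_msEntropy (f : X → X) (μ : Measure X) {m : ℕ} {ξ : Fin m → Set X}
    (hξ : IsFinPartition ξ) : ENNReal.ofReal (entOfPart f μ ξ) ≤ msEntropy f μ :=
  le_iSup_of_le m (le_iSup_of_le ξ (le_iSup_of_le hξ le_rfl))

lemma msEntropy_mix_bounds (f : X → X) (hf : Continuous f) (μ ν ρ : Measure X)
    [IsProbabilityMeasure μ] [IsProbabilityMeasure ν] [IsProbabilityMeasure ρ]
    (hμi : μ.map f = μ) (hνi : ν.map f = ν) (hρi : ρ.map f = ρ)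
    {α : ℝ} (hα0 : 0 < α) (hα1 : α < 1)
    (hmix : ∀ A : Set X, MeasurableSet A →
      (μ A).toReal = α * (ν A).toReal + (1-α) * (ρ A).toReal) :
    msEntropy f ν ≤ msEntropy f μ / ENNReal.ofReal α ∧
    ∀ (m : ℕ) (ξ : Fin m → Set X), IsFinPartition ξ →
      ENNReal.ofReal (entOfPart f μ ξ) ≤ msEntropy f ν + ENNReal.ofReal ((1-α) * m) := by
  constructor
  · refine iSup_le fun m => iSup_le fun ξ => iSup_le fun hξ => ?_
    have hmx := (entOfPart_mix f hf μ ν ρ hμi hνi hρi hα0 hα1 hmix hξ).1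
    have h1 : entOfPart f ν ξ ≤ entOfPart f μ ξ / α := (le_div_iff₀' hα0).2 hmx
    calc ENNReal.ofReal (entOfPart f ν ξ) ≤ ENNReal.ofReal (entOfPart f μ ξ / α) :=
          ENNReal.ofReal_le_ofReal h1
      _ = ENNReal.ofReal (entOfPart f μ ξ) / ENNReal.ofReal α :=
          ENNReal.ofReal_div_of_pos hα0
      _ ≤ msEntropy f μ / ENNReal.ofReal α :=
          ENNReal.div_le_div_right (ofReal_entOfPart_le_msEntropy f μ hξ) _
  · intro m ξ hξ
    have hmx := (entOfPart_mix f hf μ ν ρ hμi hνi hρi hα0 hα1 hmix hξ).2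
    have hν0 : 0 ≤ entOfPart f ν ξ := entOfPart_nonneg f ν ξ
    have hρm : entOfPart f ρ ξ ≤ m := entOfPart_le f hf ρ hξ
    have h1 : entOfPart f μ ξ ≤ entOfPart f ν ξ + (1-α) * m := by nlinarith
    calc ENNReal.ofReal (entOfPart f μ ξ)
        ≤ ENNReal.ofReal (entOfPart f ν ξ + (1-α) * m) := ENNReal.ofReal_le_ofReal h1
      _ = ENNReal.ofReal (entOfPart f ν ξ) + ENNReal.ofReal ((1-α) * m) :=
          ENNReal.ofReal_add hν0 (mul_nonneg (by linarith) (Nat.cast_nonneg m))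
      _ ≤ msEntropy f ν + ENNReal.ofReal ((1-α) * m) :=
          add_le_add_left (ofReal_entOfPart_le_msEntropy f ν hξ) _

lemma restrict_inv_key (f : X → X) (hf : Continuous f) (μ : Measure X) [IsProbabilityMeasure μ]
    (hμi : μ.map f = μ) {Y : Set X} (hY : MeasurableSet Y) (hYinv : Y ⊆ f ⁻¹' Y)
    {A : Set X} (hA : MeasurableSet A) :
    μ (f ⁻¹' A ∩ Y) = μ (A ∩ Y) ∧ μ (f ⁻¹' A ∩ Yᶜ) = μ (A ∩ Yᶜ) := by
  have h1 : μ (f ⁻¹' Y) = μ Y := inv_preimage f hf μ hμi hY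
  have h2 : μ (f ⁻¹' Y \ Y) = 0 := by
    rw [measure_diff hYinv hY.nullMeasurableSet (measure_ne_top μ Y), h1, tsub_self]
  have hAY : μ (f ⁻¹' (A ∩ Y)) = μ (A ∩ Y) := inv_preimage f hf μ hμi (hA.inter hY)
  have e1 : μ (f ⁻¹' A ∩ Y) = μ (A ∩ Y) := by
    apply le_antisymm
    · calc μ (f ⁻¹' A ∩ Y) ≤ μ (f ⁻¹' (A ∩ Y)) := by
            rw [Set.preimage_inter]
            exact measure_mono (Set.inter_subset_inter_right _ hYinv)
        _ = μ (A ∩ Y) := hAY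
    · calc μ (A ∩ Y) = μ (f ⁻¹' (A ∩ Y)) := hAY.symm
        _ ≤ μ ((f ⁻¹' A ∩ Y) ∪ (f ⁻¹' Y \ Y)) := by
            refine measure_mono ?_
            rw [Set.preimage_inter]
            rintro x ⟨hxA, hxY⟩
            by_cases h : x ∈ Y
            · exact Or.inl ⟨hxA, h⟩
            · exact Or.inr ⟨hxY, h⟩
        _ ≤ μ (f ⁻¹' A ∩ Y) + μ (f ⁻¹' Y \ Y) := measure_union_le _ _
        _ = μ (f ⁻¹' A ∩ Y) := by rw [h2, add_zero]
  refine ⟨e1, ?_⟩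
  have d1 : μ (f ⁻¹' A ∩ Y) + μ (f ⁻¹' A \ Y) = μ (f ⁻¹' A) := measure_inter_add_diff _ hY
  have d2 : μ (A ∩ Y) + μ (A \ Y) = μ A := measure_inter_add_diff _ hY
  have hAfull : μ (f ⁻¹' A) = μ A := inv_preimage f hf μ hμi hA
  have key : μ (f ⁻¹' A \ Y) = μ (A \ Y) := by
    have : μ (A ∩ Y) + μ (f ⁻¹' A \ Y) = μ (A ∩ Y) + μ (A \ Y) := by
      rw [← e1, d1, hAfull, ← d2, e1]
    exact (ENNReal.add_right_inj (measure_ne_top μ _)).1 this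
  rw [← Set.diff_eq, ← Set.diff_eq]
  exact key
end Aux5

/-- Lemma: the normalized restrictions `μ_n = μ(· ∩ X_n)/μ(X_n)` of a fully
supported-on-the-union invariant measure are invariant measures of the
subsystems, converge weakly* to `μ`, and their entropies converge to `h_μ(f)`. -/
theorem normalized_restriction_tendsto
    {X : Type*} [MetricSpace X] [CompactSpace X] [Nontrivial X]
    [MeasurableSpace X] [BorelSpace X]
    (f : X → X) (hf : Continuous f)
    (Xs : ℕ → Set X)
    (hXcomp : ∀ n, IsCompact (Xs n))
    (hXinv : ∀ n, f '' Xs n ⊆ Xs n)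
    (hXmono : Monotone Xs)
    (hXdense : closure (⋃ n, Xs n) = Set.univ)
    (μ : ProbabilityMeasure X) (hμ : μ ∈ invMeas f)
    (hfull : (μ : Measure X) (⋃ n, Xs n) = 1)
    (ν : ℕ → ProbabilityMeasure X)
    (hν : ∀ n, (μ : Measure X) (Xs n) ≠ 0 → ∀ A : Set X, MeasurableSet A →
      (ν n : Measure X) A = (μ : Measure X) (A ∩ Xs n) / (μ : Measure X) (Xs n)) :
    (∀ n, (μ : Measure X) (Xs n) ≠ 0 → ν n ∈ invMeasOn f (Xs n)) ∧
    Tendsto ν atTop (𝓝 μ) ∧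
    Tendsto (fun n => msEntropy f ((ν n : Measure X))) atTop
      (𝓝 (msEntropy f (μ : Measure X))) := by
  have hμi : (μ : Measure X).map f = (μ : Measure X) := hμ
  have hYmeas : ∀ n, MeasurableSet (Xs n) := fun n => (hXcomp n).isClosed.measurableSet
  have hYinv : ∀ n, Xs n ⊆ f ⁻¹' Xs n := fun n x hx => hXinv n ⟨x, hx, rfl⟩
  -- part 1
  have part1 : ∀ n, (μ : Measure X) (Xs n) ≠ 0 → ν n ∈ invMeasOn f (Xs n) := by
    intro n hn
    refine ⟨?_, ?_⟩
    · show ((ν n : Measure X)).map f = (ν n : Measure X)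
      refine Measure.ext fun A hA => ?_
      rw [Measure.map_apply hf.measurable hA, hν n hn _ (hf.measurable hA), hν n hn A hA]
      congr 1
      exact (restrict_inv_key f hf (μ : Measure X) hμi (hYmeas n) (hYinv n) hA).1
    · show (ν n : Measure X) (Xs n) = 1
      rw [hν n hn _ (hYmeas n), Set.inter_self]
      exact ENNReal.div_self hn (measure_ne_top _ _)
  -- measure of Xs n tends to 1
  have haten : Tendsto (fun n => (μ : Measure X) (Xs n)) atTop (𝓝 1) := by
    have := tendsto_measure_iUnion_atTop (μ := (μ : Measure X)) hXmono
    rwa [hfull] at this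
  have hα : Tendsto (fun n => ((μ : Measure X) (Xs n)).toReal) atTop (𝓝 1) := by
    have := (ENNReal.tendsto_toReal one_ne_top).comp haten
    simpa [Function.comp_def] using this
  have hev : ∀ᶠ n in atTop, (μ : Measure X) (Xs n) ≠ 0 :=
    (haten.eventually (lt_mem_nhds (by norm_num : (0:ℝ≥0∞) < 1))).mono fun n h => ne_of_gt h
  -- the normalized restriction representation
  have hνeq : ∀ n, (μ : Measure X) (Xs n) ≠ 0 →
      (ν n : Measure X) = ((μ : Measure X) (Xs n))⁻¹ • (μ : Measure X).restrict (Xs n) := by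
    intro n hn
    refine Measure.ext fun A hA => ?_
    rw [hν n hn A hA, Measure.smul_apply, Measure.restrict_apply hA, smul_eq_mul,
      div_eq_mul_inv, mul_comm]
  -- part 2 : weak* convergence
  have part2 : Tendsto ν atTop (𝓝 μ) := by
    rw [ProbabilityMeasure.tendsto_iff_forall_integral_tendsto]
    intro g
    have hUmeas : MeasurableSet (⋃ n, Xs n) := MeasurableSet.iUnion fun n => hYmeas n
    have hint : Integrable g (μ : Measure X) := g.integrable _
    have hsetint : Tendsto (fun n => ∫ x in Xs n, g x ∂(μ : Measure X)) atTop
        (𝓝 (∫ x in ⋃ n, Xs n, g x ∂(μ : Measure X))) :=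
      tendsto_setIntegral_of_monotone hYmeas hXmono hint.integrableOn
    have hcompl : (μ : Measure X) (⋃ n, Xs n)ᶜ = 0 := by
      rw [measure_compl hUmeas (measure_ne_top _ _), hfull, measure_univ, tsub_self]
    have hfullint : ∫ x in ⋃ n, Xs n, g x ∂(μ : Measure X) = ∫ x, g x ∂(μ : Measure X) := by
      rw [MeasureTheory.setIntegral_congr_set (ae_eq_univ.2 hcompl), setIntegral_univ]
    have hαinv : Tendsto (fun n => (((μ : Measure X) (Xs n)).toReal)⁻¹) atTop (𝓝 1) := by
      have := hα.inv₀ one_ne_zero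
      simpa using this
    have hmain : Tendsto (fun n => (((μ : Measure X) (Xs n)).toReal)⁻¹
        * ∫ x in Xs n, g x ∂(μ : Measure X)) atTop (𝓝 (1 * ∫ x, g x ∂(μ : Measure X))) := by
      rw [← hfullint]
      exact hαinv.mul hsetint
    rw [one_mul] at hmain
    refine hmain.congr' ?_
    filter_upwards [hev] with n hn
    rw [hνeq n hn, integral_smul_measure, ENNReal.toReal_inv, smul_eq_mul]
  refine ⟨part1, part2, ?_⟩
  -- per-n entropy bounds
  have bounds : ∀ n, (μ : Measure X) (Xs n) ≠ 0 →
      (msEntropy f (ν n : Measure X) ≤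
          msEntropy f (μ : Measure X) / ENNReal.ofReal (((μ : Measure X) (Xs n)).toReal) ∧
        ∀ (m : ℕ) (ξ : Fin m → Set X), IsFinPartition ξ →
          ENNReal.ofReal (entOfPart f (μ : Measure X) ξ) ≤ msEntropy f (ν n : Measure X)
            + ENNReal.ofReal ((1 - ((μ : Measure X) (Xs n)).toReal) * m)) := by
    intro n hn
    have hatop : (μ : Measure X) (Xs n) ≠ ⊤ := measure_ne_top _ _
    have ha1 : (μ : Measure X) (Xs n) ≤ 1 := prob_le_one
    by_cases hone : (μ : Measure X) (Xs n) = 1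
    · have hcompl : (μ : Measure X) (Xs n)ᶜ = 0 := by
        rw [measure_compl (hYmeas n) (measure_ne_top _ _), hone, measure_univ, tsub_self]
      have hmeq : (ν n : Measure X) = (μ : Measure X) := by
        refine Measure.ext fun A hA => ?_
        rw [hν n hn A hA, hone]
        rw [div_eq_mul_inv, inv_one, mul_one]

        have d : (μ : Measure X) (A ∩ Xs n) + (μ : Measure X) (A \ Xs n) = (μ : Measure X) A :=
          measure_inter_add_diff _ (hYmeas n)
        have hz : (μ : Measure X) (A \ Xs n) = 0 :=
          measure_mono_null (fun x hx => hx.2) hcompl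
        rw [hz, add_zero] at d
        exact d
      rw [hmeq, hone]
      constructor
      · simp
      · intro m ξ hξ
        exact (ofReal_entOfPart_le_msEntropy f _ hξ).trans le_self_add
    · have halt : (μ : Measure X) (Xs n) < 1 := lt_of_le_of_ne ha1 hone
      have hα0 : 0 < ((μ : Measure X) (Xs n)).toReal := ENNReal.toReal_pos hn hatop
      have hα1 : ((μ : Measure X) (Xs n)).toReal < 1 := by
        have := (ENNReal.toReal_lt_toReal hatop one_ne_top).2 halt
        simpa using this
      have h1a : (1 : ℝ≥0∞) - (μ : Measure X) (Xs n) ≠ 0 := by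
        rw [Ne, tsub_eq_zero_iff_le]
        exact not_le.2 halt
      have h1atop : (1 : ℝ≥0∞) - (μ : Measure X) (Xs n) ≠ ⊤ :=
        (tsub_le_self.trans_lt one_lt_top).ne
      set ρ : Measure X :=
        ((1 : ℝ≥0∞) - (μ : Measure X) (Xs n))⁻¹ • (μ : Measure X).restrict (Xs n)ᶜ with hρdef
      have hYc : (μ : Measure X) (Xs n)ᶜ = 1 - (μ : Measure X) (Xs n) := by
        rw [measure_compl (hYmeas n) (measure_ne_top _ _), measure_univ]
      have hρapp : ∀ A : Set X, MeasurableSet A →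
          ρ A = ((1 : ℝ≥0∞) - (μ : Measure X) (Xs n))⁻¹ * (μ : Measure X) (A ∩ (Xs n)ᶜ) := by
        intro A hA
        rw [hρdef, Measure.smul_apply, Measure.restrict_apply hA, smul_eq_mul]
      have hρprob : IsProbabilityMeasure ρ := by
        constructor
        rw [hρapp _ MeasurableSet.univ, Set.univ_inter, hYc,
          ENNReal.inv_mul_cancel h1a h1atop]
      have hρinv : ρ.map f = ρ := by
        refine Measure.ext fun A hA => ?_
        rw [Measure.map_apply hf.measurable hA, hρapp _ (hf.measurable hA), hρapp A hA]
        congr 1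
        exact (restrict_inv_key f hf (μ : Measure X) hμi (hYmeas n) (hYinv n) hA).2
      have hνinv : (ν n : Measure X).map f = (ν n : Measure X) := (part1 n hn).1
      have hmix : ∀ A : Set X, MeasurableSet A →
          ((μ : Measure X) A).toReal = ((μ : Measure X) (Xs n)).toReal * ((ν n : Measure X) A).toReal
            + (1 - ((μ : Measure X) (Xs n)).toReal) * (ρ A).toReal := by
        intro A hA
        have hone' : ((1 : ℝ≥0∞) - (μ : Measure X) (Xs n)).toReal
            = 1 - ((μ : Measure X) (Xs n)).toReal := by
          rw [ENNReal.toReal_sub_of_le ha1 one_ne_top, ENNReal.toReal_one]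
        have hνA : ((ν n : Measure X) A).toReal
            = ((μ : Measure X) (A ∩ Xs n)).toReal / ((μ : Measure X) (Xs n)).toReal := by
          rw [hν n hn A hA, ENNReal.toReal_div]
        have hρA : (ρ A).toReal
            = ((μ : Measure X) (A ∩ (Xs n)ᶜ)).toReal / (1 - ((μ : Measure X) (Xs n)).toReal) := by
          rw [hρapp A hA, ENNReal.toReal_mul, ENNReal.toReal_inv, hone']
          ring
        have d : (μ : Measure X) (A ∩ Xs n) + (μ : Measure X) (A \ Xs n) = (μ : Measure X) A :=
          measure_inter_add_diff _ (hYmeas n)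
        have dt : ((μ : Measure X) A).toReal = ((μ : Measure X) (A ∩ Xs n)).toReal
            + ((μ : Measure X) (A ∩ (Xs n)ᶜ)).toReal := by
          rw [← Set.diff_eq, ← d, ENNReal.toReal_add (measure_ne_top _ _) (measure_ne_top _ _)]
        have hne : 1 - ((μ : Measure X) (Xs n)).toReal ≠ 0 := by linarith
        have e1 : ((μ : Measure X) (Xs n)).toReal
            * (((μ : Measure X) (A ∩ Xs n)).toReal / ((μ : Measure X) (Xs n)).toReal)
            = ((μ : Measure X) (A ∩ Xs n)).toReal := by
          field_simp
        have e2 : (1 - ((μ : Measure X) (Xs n)).toReal)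
            * (((μ : Measure X) (A ∩ (Xs n)ᶜ)).toReal / (1 - ((μ : Measure X) (Xs n)).toReal))
            = ((μ : Measure X) (A ∩ (Xs n)ᶜ)).toReal := by
          field_simp
        rw [hνA, hρA, dt, e1, e2]
      exact msEntropy_mix_bounds f hf (μ : Measure X) (ν n : Measure X) ρ hμi hνinv hρinv
        hα0 hα1 hmix
  -- limsup bound
  have hlimsup : limsup (fun n => msEntropy f (ν n : Measure X)) atTop
      ≤ msEntropy f (μ : Measure X) := by
    by_cases hE : msEntropy f (μ : Measure X) = ⊤
    · rw [hE]; exact le_top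
    · have h1 : Tendsto (fun n => ENNReal.ofReal (((μ : Measure X) (Xs n)).toReal)) atTop
          (𝓝 1) := by
        refine haten.congr fun k => ?_
        rw [ENNReal.ofReal_toReal (measure_ne_top _ _)]
      have htd : Tendsto (fun n => msEntropy f (μ : Measure X)
          / ENNReal.ofReal (((μ : Measure X) (Xs n)).toReal)) atTop
          (𝓝 (msEntropy f (μ : Measure X))) := by
        have h2 : Tendsto (fun n => (ENNReal.ofReal (((μ : Measure X) (Xs n)).toReal))⁻¹) atTop
            (𝓝 1) := by
          have := h1.inv
          simpa using this
        have := ENNReal.Tendsto.const_mul h2 (Or.inr hE)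
        simpa [div_eq_mul_inv] using this
      calc limsup (fun n => msEntropy f (ν n : Measure X)) atTop
          ≤ limsup (fun n => msEntropy f (μ : Measure X)
              / ENNReal.ofReal (((μ : Measure X) (Xs n)).toReal)) atTop :=
            limsup_le_limsup (hev.mono fun n hn => (bounds n hn).1)
        _ = msEntropy f (μ : Measure X) := htd.limsup_eq
  -- liminf bound
  have hliminf : msEntropy f (μ : Measure X)
      ≤ liminf (fun n => msEntropy f (ν n : Measure X)) atTop := by
    refine iSup_le fun m => iSup_le fun ξ => iSup_le fun hξ => ?_
    refine ENNReal.le_of_forall_pos_le_add fun ε hε _ => ?_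
    have hev2 : ∀ᶠ n in atTop,
        ENNReal.ofReal ((1 - ((μ : Measure X) (Xs n)).toReal) * m) < (ε : ℝ≥0∞) := by
      have ht : Tendsto (fun n => ENNReal.ofReal ((1 - ((μ : Measure X) (Xs n)).toReal) * m))
          atTop (𝓝 0) := by
        have hr : Tendsto (fun n => (1 - ((μ : Measure X) (Xs n)).toReal) * m) atTop
            (𝓝 ((1 - 1) * m)) := (tendsto_const_nhds.sub hα).mul tendsto_const_nhds
        have := (ENNReal.continuous_ofReal.tendsto _).comp hr
        simpa [Function.comp_def] using this
      exact ht.eventually (gt_mem_nhds (by exact_mod_cast hε))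
    have hev3 : ∀ᶠ n in atTop, ENNReal.ofReal (entOfPart f (μ : Measure X) ξ) - (ε : ℝ≥0∞)
        ≤ msEntropy f (ν n : Measure X) := by
      filter_upwards [hev, hev2] with n hn hn2
      refine tsub_le_iff_right.2 ?_
      exact ((bounds n hn).2 m ξ hξ).trans (add_le_add_right hn2.le _)
    have hlim : ENNReal.ofReal (entOfPart f (μ : Measure X) ξ) - (ε : ℝ≥0∞)
        ≤ liminf (fun n => msEntropy f (ν n : Measure X)) atTop :=
      le_liminf_of_le (by isBoundedDefault) hev3
    exact tsub_le_iff_right.1 hlim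
  exact tendsto_of_le_liminf_of_limsup_le hliminf hlimsup
end
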